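/- arXiv:1907.01259 — 3 statements merged into one kernel-verified Lean document; each statement's English description precedes it below -/
import Mathlib

section
/- Let X be a pure finite n-dimensional simplicial complex and let G be a finite group of simplicial automorphisms of X whose action is transitive on the set X(n) of n-dimensional faces. Then for every 0 ≤ k ≤ n−1, if the k-th cone radius Crad_k(X) is finite, then Exp^k_b(X) ≥ 1 / (C(n+1,k+1) · Crad_k(X)), where C(n+1,k+1) is the binomial coefficient. -/
open Finset

/-- A finite simplicial complex on vertex type `V`. -/
structure SCplx (V : Type) [DecidableEq V] where
  faces : Finset (Finset V)
  empty_mem : ∅ ∈ faces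
  down_closed : ∀ σ ∈ faces, ∀ τ ⊆ σ, τ ∈ faces

namespace SCplx

variable {V : Type} [DecidableEq V]

/-- Faces of cardinality `m`, i.e. the faces in `X(m-1)`. -/
def cfaces (X : SCplx V) (m : ℕ) : Finset (Finset V) :=
  X.faces.filter fun σ => σ.card = m

/-- `X` is pure `n`-dimensional. -/
def Pure (X : SCplx V) (n : ℕ) : Prop :=
  ∀ σ ∈ X.faces, ∃ τ ∈ X.cfaces (n + 1), σ ⊆ τ

/-- a chain/cochain of grade `m`: supported on faces of cardinality `m`. -/
def IsGraded (X : SCplx V) (m : ℕ) (c : Finset V → ZMod 2) : Prop :=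
  ∀ σ, c σ ≠ 0 → σ ∈ X.cfaces m

/-- boundary map (all degrees simultaneously, with the reduced convention `∂₀{v} = ∅`). -/
def bdry (X : SCplx V) (c : Finset V → ZMod 2) : Finset V → ZMod 2 := fun τ =>
  ∑ σ ∈ X.faces.filter (fun σ => τ ⊆ σ ∧ σ.card = τ.card + 1), c σ

/-- coboundary map (all degrees simultaneously). -/
def cobdry (X : SCplx V) (c : Finset V → ZMod 2) : Finset V → ZMod 2 := fun σ =>
  if σ ∈ X.faces then ∑ τ ∈ X.faces.filter (fun τ => τ ⊆ σ ∧ τ.card + 1 = σ.card), c τ else 0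

/-- support of a chain/cochain. -/
def supp (X : SCplx V) (c : Finset V → ZMod 2) : Finset (Finset V) :=
  X.faces.filter fun σ => c σ ≠ 0

/-- the size `|A|` of a chain. -/
def chainCard (X : SCplx V) (c : Finset V → ZMod 2) : ℕ := (X.supp c).card

/-- the chain consisting of a single simplex. -/
def sChain (τ : Finset V) : Finset V → ZMod 2 := fun σ => if σ = τ then 1 else 0

/-- the weight `w(τ)` in a pure `n`-dimensional complex. -/
noncomputable def w (X : SCplx V) (n : ℕ) (τ : Finset V) : ℝ :=
  (((X.cfaces (n + 1)).filter fun σ => τ ⊆ σ).card : ℝ) /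
    (((n + 1).choose τ.card : ℝ) * ((X.cfaces (n + 1)).card : ℝ))

/-- the weight `w(φ)` of a cochain. -/
noncomputable def wC (X : SCplx V) (n : ℕ) (c : Finset V → ZMod 2) : ℝ :=
  ∑ τ ∈ X.supp c, X.w n τ

/-- `φ ∈ B^k(X)`, i.e. `φ` is in the image of `d_{k-1}` on `C^{k-1}(X)`. -/
def IsCoboundary (X : SCplx V) (k : ℕ) (φ : Finset V → ZMod 2) : Prop :=
  ∃ ψ, X.IsGraded k ψ ∧ φ = X.cobdry ψ

/-- evaluation `φ(A)` of a cochain on a chain. -/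
def pair (X : SCplx V) (φ c : Finset V → ZMod 2) : ZMod 2 :=
  ∑ τ ∈ X.faces, φ τ * c τ

/-- A cone function for dimensions `-1,…,K-1` (i.e. a `(K-1)`-cone function)
with apex `v`; chains of dimension `j` are represented in grade (cardinality) `j+1`. -/
structure ConeFun (X : SCplx V) (K : ℕ) (v : V) where
  toFun : (Finset V → ZMod 2) → (Finset V → ZMod 2)
  map_add : ∀ c₁ c₂, toFun (c₁ + c₂) = toFun c₁ + toFun c₂
  graded : ∀ m ≤ K, ∀ c, X.IsGraded m c → X.IsGraded (m + 1) (toFun c)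
  apex : toFun (sChain ∅) = sChain {v}
  cone_eq : ∀ m, 1 ≤ m → m ≤ K → ∀ c, X.IsGraded m c →
    X.bdry (toFun c) = c + toFun (X.bdry c)

/-- the volume of a cone function. -/
def ConeFun.Vol {X : SCplx V} {K : ℕ} {v : V} (C : ConeFun X K v) : ℕ :=
  (X.cfaces K).sup fun τ => X.chainCard (C.toFun (sChain τ))

/-- the cone radius `Crad_{K-1}(X)`. -/
noncomputable def Crad (X : SCplx V) (K : ℕ) : ℕ∞ :=
  ⨅ (v : V) (C : ConeFun X K v), (C.Vol : ℕ∞)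

/-- push-forward of chains along a permutation of the vertices. -/
def pushChain (e : Equiv.Perm V) (c : Finset V → ZMod 2) : Finset V → ZMod 2 :=
  fun σ => c (σ.image e.symm)

/-- the action `ρ(g).f` of a group element on a cone function (on the level of raw maps). -/
def coneAct {G : Type*} [Group G] (ρ : G →* Equiv.Perm V) (g : G)
    (f : (Finset V → ZMod 2) → (Finset V → ZMod 2)) :
    (Finset V → ZMod 2) → (Finset V → ZMod 2) :=
  fun c => pushChain (ρ g) (f (pushChain (ρ g⁻¹) c))

/-- `c ∈ Z_k(X)` : a cycle of dimension `k` (grade `k+1`). -/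
def IsCycle (X : SCplx V) (k : ℕ) (c : Finset V → ZMod 2) : Prop :=
  X.IsGraded (k + 1) c ∧ X.bdry c = 0

/-- `c ∈ B_k(X)` : a boundary of dimension `k` (grade `k+1`). -/
def IsBdryChain (X : SCplx V) (k : ℕ) (c : Finset V → ZMod 2) : Prop :=
  ∃ a, X.IsGraded (k + 2) a ∧ X.bdry a = c

/-- the size of the smallest `k`-systole. -/
noncomputable def Sys (X : SCplx V) (k : ℕ) : ℕ∞ :=
  ⨅ (c : {c : Finset V → ZMod 2 // X.IsCycle k c ∧ ¬X.IsBdryChain k c}),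
    (X.chainCard c.1 : ℕ∞)

/-- `Fill_k(B)` : the size of the smallest filling of the cycle `B`. -/
noncomputable def FillB (X : SCplx V) (k : ℕ) (B : Finset V → ZMod 2) : ℕ∞ :=
  ⨅ (a : {a : Finset V → ZMod 2 // X.IsGraded (k + 2) a ∧ X.bdry a = B}),
    (X.chainCard a.1 : ℕ∞)

/-- `Fill_k(M)` : the filling function. -/
noncomputable def Fill (X : SCplx V) (k : ℕ) (M : ℕ∞) : ℕ∞ :=
  ⨆ (B : {B : Finset V → ZMod 2 // X.IsCycle k B ∧ (X.chainCard B : ℕ∞) ≤ M}),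
    X.FillB k B.1

/-- the constants `M_{k-1}` of Proposition `filling constants prop` (index shifted by one:
`Mconst X (k+1) = M_k`). -/
noncomputable def Mconst (X : SCplx V) : ℕ → ℕ∞
  | 0 => 1
  | (j + 1) => X.Fill j (((j : ℕ∞) + 1) * X.Mconst j + 1)

end SCplx

namespace Stmt0Aux

open SCplx

variable {V : Type} [DecidableEq V]

/-- action of a permutation on a finset of vertices -/
def act (e : Equiv.Perm V) (σ : Finset V) : Finset V := σ.image e

lemma act_act (e f : Equiv.Perm V) (σ : Finset V) : act e (act f σ) = act (e * f) σ := by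
  simp [act, Finset.image_image]

lemma act_one (σ : Finset V) : act (1 : Equiv.Perm V) σ = σ := by
  simp [act]

lemma card_act (e : Equiv.Perm V) (σ : Finset V) : (act e σ).card = σ.card :=
  Finset.card_image_of_injective _ e.injective

lemma act_subset_iff {e : Equiv.Perm V} {σ τ : Finset V} : act e σ ⊆ act e τ ↔ σ ⊆ τ :=
  Finset.image_subset_image_iff e.injective

section GroupAct

variable {G : Type} [Group G] (ρ : G →* Equiv.Perm V)

/-- the action of a group element on faces -/
def ag (g : G) (σ : Finset V) : Finset V := act (ρ g) σ

lemma ag_def (g : G) (σ : Finset V) : ag ρ g σ = σ.image (ρ g) := rfl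

lemma ag_ag (g h : G) (σ : Finset V) : ag ρ g (ag ρ h σ) = ag ρ (g * h) σ := by
  rw [ag, ag, ag, act_act, ← map_mul]

lemma ag_one (σ : Finset V) : ag ρ 1 σ = σ := by rw [ag, map_one, act_one]

lemma ag_inv_ag (g : G) (σ : Finset V) : ag ρ g⁻¹ (ag ρ g σ) = σ := by
  rw [ag_ag, inv_mul_cancel, ag_one]

lemma ag_ag_inv (g : G) (σ : Finset V) : ag ρ g (ag ρ g⁻¹ σ) = σ := by
  rw [ag_ag, mul_inv_cancel, ag_one]

lemma card_ag (g : G) (σ : Finset V) : (ag ρ g σ).card = σ.card := card_act _ _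

lemma ag_subset_iff {g : G} {σ τ : Finset V} : ag ρ g σ ⊆ ag ρ g τ ↔ σ ⊆ τ := act_subset_iff

lemma ag_inv_eq_iff {g : G} {σ τ : Finset V} : ag ρ g⁻¹ σ = τ ↔ σ = ag ρ g τ := by
  constructor
  · rintro rfl; rw [ag_ag_inv]
  · rintro rfl; rw [ag_inv_ag]

lemma ag_mem_faces_iff (X : SCplx V)
    (hface : ∀ (g : G), ∀ σ ∈ X.faces, σ.image (ρ g) ∈ X.faces)
    (g : G) (σ : Finset V) : ag ρ g σ ∈ X.faces ↔ σ ∈ X.faces := by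
  constructor
  · intro h
    have h2 := hface g⁻¹ _ h
    rwa [← ag_def, ag_inv_ag] at h2
  · exact fun h => hface g σ h

lemma ag_mem_cfaces_iff (X : SCplx V)
    (hface : ∀ (g : G), ∀ σ ∈ X.faces, σ.image (ρ g) ∈ X.faces)
    (g : G) (σ : Finset V) (m : ℕ) :
    ag ρ g σ ∈ X.cfaces m ↔ σ ∈ X.cfaces m := by
  simp only [SCplx.cfaces, Finset.mem_filter, ag_mem_faces_iff ρ X hface, card_ag]

end GroupAct

end Stmt0Aux
namespace Stmt0Aux

open SCplx

variable {V : Type} [DecidableEq V]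

lemma mem_cfaces {X : SCplx V} {σ : Finset V} {m : ℕ} :
    σ ∈ X.cfaces m ↔ σ ∈ X.faces ∧ σ.card = m := Finset.mem_filter

lemma graded_zero {X : SCplx V} {m : ℕ} {c : Finset V → ZMod 2}
    (h : X.IsGraded m c) {σ : Finset V} (hσ : σ ∉ X.cfaces m) : c σ = 0 := by
  by_contra hc
  exact hσ (h σ hc)

lemma graded_add {X : SCplx V} {m : ℕ} {a b : Finset V → ZMod 2}
    (ha : X.IsGraded m a) (hb : X.IsGraded m b) : X.IsGraded m (a + b) := by
  intro σ hσ
  by_contra h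
  exact hσ (by rw [Pi.add_apply, graded_zero ha h, graded_zero hb h, add_zero])

lemma sChain_graded {X : SCplx V} {m : ℕ} {τ : Finset V} (h : τ ∈ X.cfaces m) :
    X.IsGraded m (sChain τ) := by
  intro σ hσ
  have : σ = τ := by
    by_contra hne
    exact hσ (by simp [sChain, hne])
  rwa [this]

lemma cobdry_graded {X : SCplx V} {m : ℕ} {φ : Finset V → ZMod 2}
    (h : X.IsGraded m φ) : X.IsGraded (m + 1) (X.cobdry φ) := by
  intro σ hσ
  rw [SCplx.cobdry] at hσ
  by_cases hf : σ ∈ X.faces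
  · rw [if_pos hf] at hσ
    obtain ⟨τ, hτ, hτ0⟩ := Finset.exists_ne_zero_of_sum_ne_zero hσ
    rw [Finset.mem_filter] at hτ
    have hcf := h τ hτ0
    rw [mem_cfaces] at hcf
    rw [mem_cfaces]
    refine ⟨hf, ?_⟩
    have h1 : τ.card = m := hcf.2
    have h2 : τ.card + 1 = σ.card := hτ.2.2
    omega
  · rw [if_neg hf] at hσ
    exact absurd rfl hσ

lemma pair_add (X : SCplx V) (φ a b : Finset V → ZMod 2) :
    X.pair φ (a + b) = X.pair φ a + X.pair φ b := by
  rw [SCplx.pair, SCplx.pair, SCplx.pair, ← Finset.sum_add_distrib]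
  exact Finset.sum_congr rfl fun τ _ => by rw [Pi.add_apply, mul_add]

lemma pair_sChain (X : SCplx V) (φ : Finset V → ZMod 2) {τ : Finset V} (hτ : τ ∈ X.faces) :
    X.pair φ (sChain τ) = φ τ := by
  rw [SCplx.pair]
  rw [Finset.sum_eq_single_of_mem τ hτ]
  · simp [sChain]
  · intro σ hσ hne
    simp [sChain, hne]

lemma pair_bdry (X : SCplx V) (φ c : Finset V → ZMod 2) :
    X.pair φ (X.bdry c) = X.pair (X.cobdry φ) c := by
  rw [SCplx.pair, SCplx.pair]
  have lhs : ∀ τ ∈ X.faces, φ τ * X.bdry c τ =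
      ∑ σ ∈ X.faces, if τ ⊆ σ ∧ σ.card = τ.card + 1 then φ τ * c σ else 0 := by
    intro τ _
    rw [SCplx.bdry, Finset.mul_sum, Finset.sum_filter]
  have rhs : ∀ σ ∈ X.faces, X.cobdry φ σ * c σ =
      ∑ τ ∈ X.faces, if τ ⊆ σ ∧ σ.card = τ.card + 1 then φ τ * c σ else 0 := by
    intro σ hσ
    rw [SCplx.cobdry, if_pos hσ, Finset.sum_mul, Finset.sum_filter]
    refine Finset.sum_congr rfl fun τ _ => ?_
    have : (τ ⊆ σ ∧ τ.card + 1 = σ.card) ↔ (τ ⊆ σ ∧ σ.card = τ.card + 1) := by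
      constructor <;> exact fun ⟨h1, h2⟩ => ⟨h1, h2.symm⟩
    rw [if_congr this rfl rfl]
  rw [Finset.sum_congr rfl lhs, Finset.sum_congr rfl rhs, Finset.sum_comm]

lemma bdry_sChain (X : SCplx V) {τ : Finset V} (hτ : τ ∈ X.faces) :
    X.bdry (sChain τ) = ∑ α ∈ τ.powerset.filter (fun α => α.card + 1 = τ.card), sChain α := by
  funext β
  rw [SCplx.bdry]
  have : ∀ σ ∈ X.faces.filter (fun σ => β ⊆ σ ∧ σ.card = β.card + 1),
      sChain τ σ = if σ = τ then (1 : ZMod 2) else 0 := fun σ _ => rfl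
  rw [Finset.sum_congr rfl this, Finset.sum_ite_eq' _ τ (fun _ => (1:ZMod 2))]
  rw [Finset.sum_apply]
  have : ∀ α ∈ τ.powerset.filter (fun α => α.card + 1 = τ.card),
      sChain α β = if β = α then (1 : ZMod 2) else 0 := fun α _ => rfl
  rw [Finset.sum_congr rfl this, Finset.sum_ite_eq _ β (fun _ => (1:ZMod 2))]
  simp only [Finset.mem_filter, Finset.mem_powerset, hτ, true_and]
  exact if_congr (by constructor <;> (rintro ⟨h2, h3⟩; exact ⟨h2, h3.symm⟩)) rfl rfl

end Stmt0Aux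
namespace Stmt0Aux

open SCplx

variable {V : Type} [DecidableEq V]

/-- d ∘ d = 0 -/
lemma cobdry_cobdry (X : SCplx V) (φ : Finset V → ZMod 2) :
    X.cobdry (X.cobdry φ) = 0 := by
  funext η
  rw [SCplx.cobdry]
  by_cases hη : η ∈ X.faces
  · rw [if_pos hη]
    have hterm : ∀ ρ ∈ X.faces.filter (fun ρ => ρ ⊆ η ∧ ρ.card + 1 = η.card),
        X.cobdry φ ρ = ∑ τ ∈ X.faces, if τ ⊆ ρ ∧ τ.card + 1 = ρ.card then φ τ else 0 := by
      intro ρ hρ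
      rw [Finset.mem_filter] at hρ
      rw [SCplx.cobdry, if_pos hρ.1, Finset.sum_filter]
    rw [Finset.sum_congr rfl hterm, Finset.sum_filter, Pi.zero_apply]
    have swap : ∀ ρ ∈ X.faces, (if ρ ⊆ η ∧ ρ.card + 1 = η.card then
        (∑ τ ∈ X.faces, if τ ⊆ ρ ∧ τ.card + 1 = ρ.card then φ τ else 0) else 0) =
        ∑ τ ∈ X.faces, (if (τ ⊆ ρ ∧ τ.card + 1 = ρ.card) ∧ (ρ ⊆ η ∧ ρ.card + 1 = η.card)
          then φ τ else 0) := by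
      intro ρ _
      by_cases hc : ρ ⊆ η ∧ ρ.card + 1 = η.card
      · rw [if_pos hc]
        exact Finset.sum_congr rfl fun τ _ => by
          by_cases hc2 : τ ⊆ ρ ∧ τ.card + 1 = ρ.card
          · rw [if_pos hc2, if_pos ⟨hc2, hc⟩]
          · rw [if_neg hc2, if_neg (fun hh => hc2 hh.1)]
      · rw [if_neg hc]
        exact (Finset.sum_eq_zero fun τ _ => by rw [if_neg (fun hh => hc hh.2)]).symm
    rw [Finset.sum_congr rfl swap, Finset.sum_comm]
    refine Finset.sum_eq_zero fun τ hτ => ?_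
    -- inner sum over ρ : number of ρ with τ ⊆ ρ ⊆ η, |ρ| = |τ|+1 = |η|-1 — even
    have key : ∀ c : ZMod 2, ∑ ρ ∈ X.faces, (if (τ ⊆ ρ ∧ τ.card + 1 = ρ.card) ∧
        (ρ ⊆ η ∧ ρ.card + 1 = η.card) then c else 0) = 0 := by
      intro c
      rw [← Finset.sum_filter, Finset.sum_const]
      have hcard : (X.faces.filter (fun ρ => (τ ⊆ ρ ∧ τ.card + 1 = ρ.card) ∧
          (ρ ⊆ η ∧ ρ.card + 1 = η.card))).card =
          if τ ⊆ η ∧ τ.card + 2 = η.card then 2 else 0 := by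
        by_cases hgood : τ ⊆ η ∧ τ.card + 2 = η.card
        · rw [if_pos hgood]
          have himg : X.faces.filter (fun ρ => (τ ⊆ ρ ∧ τ.card + 1 = ρ.card) ∧
              (ρ ⊆ η ∧ ρ.card + 1 = η.card)) = (η \ τ).image (fun z => insert z τ) := by
            ext ρ
            simp only [Finset.mem_filter, Finset.mem_image, Finset.mem_sdiff]
            constructor
            · rintro ⟨hρf, ⟨hτρ, hcρ⟩, hρη, hcη⟩
              have : ∃ z ∈ ρ, z ∉ τ := by
                by_contra hno
                push_neg at hno
                have : ρ ⊆ τ := hno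
                have := Finset.card_le_card this
                omega
              obtain ⟨z, hzρ, hzτ⟩ := this
              refine ⟨z, ⟨hρη hzρ, hzτ⟩, ?_⟩
              apply Finset.eq_of_subset_of_card_le
              · intro x hx
                rcases Finset.mem_insert.mp hx with rfl | hx
                · exact hzρ
                · exact hτρ hx
              · rw [Finset.card_insert_of_notMem hzτ]; omega
            · rintro ⟨z, ⟨hzη, hzτ⟩, rfl⟩
              have hins : insert z τ ⊆ η := by
                intro x hx
                rcases Finset.mem_insert.mp hx with rfl | hx
                · exact hzη
                · exact hgood.1 hx
              have hcard : (insert z τ).card = τ.card + 1 := Finset.card_insert_of_notMem hzτ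
              exact ⟨X.down_closed η hη _ hins, ⟨Finset.subset_insert _ _, hcard.symm ▸ rfl⟩,
                hins, by omega⟩
          rw [himg, Finset.card_image_of_injOn, Finset.card_sdiff_of_subset hgood.1]
          · omega
          · intro a ha b hb hab
            simp only [Finset.mem_coe, Finset.mem_sdiff] at ha hb
            have h2 : insert a τ = insert b τ := hab
            have : a ∈ insert b τ := by rw [← h2]; exact Finset.mem_insert_self a τ
            rcases Finset.mem_insert.mp this with h | h
            · exact h
            · exact absurd h ha.2
        · rw [if_neg hgood]
          rw [Finset.card_eq_zero, Finset.filter_eq_empty_iff]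
          rintro ρ hρ ⟨⟨hτρ, hc1⟩, hρη, hc2⟩
          exact hgood ⟨hτρ.trans hρη, by omega⟩
      rw [hcard]
      by_cases hgood : τ ⊆ η ∧ τ.card + 2 = η.card
      · rw [if_pos hgood]
        rw [two_nsmul]
        exact CharTwo.add_self_eq_zero c
      · rw [if_neg hgood, zero_smul]
    exact key (φ τ)
  · rw [if_neg hη, Pi.zero_apply]

end Stmt0Aux
namespace Stmt0Aux

open SCplx

variable {V : Type} [DecidableEq V]

section Push

variable {G : Type} [Group G] (ρ : G →* Equiv.Perm V)

/-- push-forward of a chain along the action of `g` -/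
def pg (g : G) (c : Finset V → ZMod 2) : Finset V → ZMod 2 := fun σ => c (ag ρ g⁻¹ σ)

lemma pg_apply (g : G) (c : Finset V → ZMod 2) (σ : Finset V) :
    pg ρ g c σ = c (ag ρ g⁻¹ σ) := rfl

lemma pg_add (g : G) (a b : Finset V → ZMod 2) : pg ρ g (a + b) = pg ρ g a + pg ρ g b := rfl

lemma pg_sChain (g : G) (T : Finset V) : pg ρ g (sChain T) = sChain (ag ρ g T) := by
  funext σ
  rw [pg_apply, sChain, sChain]
  exact if_congr (by rw [ag_inv_eq_iff]) rfl rfl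

lemma pg_pg (g h : G) (c : Finset V → ZMod 2) : pg ρ g (pg ρ h c) = pg ρ (g * h) c := by
  funext σ
  rw [pg_apply, pg_apply, pg_apply, ag_ag, mul_inv_rev]

lemma pg_one (c : Finset V → ZMod 2) : pg ρ 1 c = c := by
  funext σ
  rw [pg_apply, inv_one, ag_one]

lemma pg_inv_pg (g : G) (c : Finset V → ZMod 2) : pg ρ g⁻¹ (pg ρ g c) = c := by
  rw [pg_pg, inv_mul_cancel, pg_one]

lemma pg_pg_inv (g : G) (c : Finset V → ZMod 2) : pg ρ g (pg ρ g⁻¹ c) = c := by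
  rw [pg_pg, mul_inv_cancel, pg_one]

variable (X : SCplx V)

lemma graded_pg (hface : ∀ (g : G), ∀ σ ∈ X.faces, σ.image (ρ g) ∈ X.faces) (g : G) {m : ℕ} {c : Finset V → ZMod 2} (h : X.IsGraded m c) :
    X.IsGraded m (pg ρ g c) := by
  intro σ hσ
  rw [pg_apply] at hσ
  have h1 := h _ hσ
  have h2 := (ag_mem_cfaces_iff ρ X hface g (ag ρ g⁻¹ σ) m).mpr h1
  rwa [ag_ag_inv] at h2

lemma bdry_pg (hface : ∀ (g : G), ∀ σ ∈ X.faces, σ.image (ρ g) ∈ X.faces) (g : G) (c : Finset V → ZMod 2) :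
    X.bdry (pg ρ g c) = pg ρ g (X.bdry c) := by
  funext τ
  rw [pg_apply, SCplx.bdry, SCplx.bdry]
  refine Finset.sum_bij' (fun σ _ => ag ρ g⁻¹ σ) (fun σ _ => ag ρ g σ) ?_ ?_ ?_ ?_ ?_
  · intro σ hσ
    rw [Finset.mem_filter] at hσ ⊢
    refine ⟨(ag_mem_faces_iff ρ X hface g⁻¹ σ).mpr hσ.1, ?_, ?_⟩
    · have := hσ.2.1
      rw [← ag_subset_iff ρ (g := g⁻¹)] at this
      exact this
    · rw [card_ag, card_ag, hσ.2.2]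
  · intro σ hσ
    rw [Finset.mem_filter] at hσ ⊢
    refine ⟨?_, ?_, ?_⟩
    · have := (ag_mem_faces_iff ρ X hface g σ).mpr hσ.1
      exact this
    · have := hσ.2.1
      rw [← ag_subset_iff ρ (g := g)] at this
      rwa [ag_ag_inv] at this
    · rw [card_ag, hσ.2.2, card_ag]
  · exact fun σ _ => ag_ag_inv ρ g σ
  · exact fun σ _ => ag_inv_ag ρ g σ
  · intro σ _; rfl

/-- the degree of a face: the number of top faces containing it -/
def degT (X : SCplx V) (n : ℕ) (τ : Finset V) : ℕ :=
  ((X.cfaces (n + 1)).filter fun F => τ ⊆ F).card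

lemma deg_ag (hface : ∀ (g : G), ∀ σ ∈ X.faces, σ.image (ρ g) ∈ X.faces) (n : ℕ) (g : G) (τ : Finset V) : degT X n (ag ρ g τ) = degT X n τ := by
  rw [degT, degT]
  refine Finset.card_bij' (fun F _ => ag ρ g⁻¹ F) (fun F _ => ag ρ g F) ?_ ?_ ?_ ?_
  · intro F hF
    rw [Finset.mem_filter] at hF ⊢
    refine ⟨(ag_mem_cfaces_iff ρ X hface g⁻¹ F _).mpr hF.1, ?_⟩
    have := hF.2
    rw [← ag_subset_iff ρ (g := g⁻¹)] at this
    rwa [ag_inv_ag] at this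
  · intro F hF
    rw [Finset.mem_filter] at hF ⊢
    refine ⟨(ag_mem_cfaces_iff ρ X hface g F _).mpr hF.1, ?_⟩
    have := hF.2
    rw [← ag_subset_iff ρ (g := g)] at this
    exact this
  · exact fun F _ => ag_ag_inv ρ g F
  · exact fun F _ => ag_inv_ag ρ g F

lemma w_eq_deg (X : SCplx V) (n : ℕ) (τ : Finset V) :
    X.w n τ = (degT X n τ : ℝ) /
      (((n + 1).choose τ.card : ℝ) * ((X.cfaces (n + 1)).card : ℝ)) := rfl

lemma w_ag (hface : ∀ (g : G), ∀ σ ∈ X.faces, σ.image (ρ g) ∈ X.faces) (n : ℕ) (g : G) (τ : Finset V) : X.w n (ag ρ g τ) = X.w n τ := by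
  rw [w_eq_deg, w_eq_deg, deg_ag ρ X hface, card_ag]

end Push

end Stmt0Aux
namespace Stmt0Aux

open SCplx

variable {V : Type} [DecidableEq V]

/-- the simplex lemma: a top face supporting a non-zero value of a coboundary supports
at least `n - k` of them. -/
lemma simplex_lb (X : SCplx V) {n k : ℕ} (hk : k < n) {φ : Finset V → ZMod 2}
    (hφ : X.IsGraded (k + 1) φ) {F : Finset V} (hF : F ∈ X.cfaces (n + 1))
    {ρ₀ : Finset V} (hρ₀F : ρ₀ ⊆ F) (hρ₀ : X.cobdry φ ρ₀ ≠ 0) :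
    n - k ≤ (F.powerset.filter (fun ρ => X.cobdry φ ρ ≠ 0)).card := by
  classical
  have hFf : F ∈ X.faces := (mem_cfaces.mp hF).1
  have hFc : F.card = n + 1 := (mem_cfaces.mp hF).2
  have hgr : X.IsGraded (k + 2) (X.cobdry φ) := cobdry_graded hφ
  have hρ₀c : ρ₀.card = k + 2 := (mem_cfaces.mp (hgr _ hρ₀)).2
  have hρ₀f : ρ₀ ∈ X.faces := (mem_cfaces.mp (hgr _ hρ₀)).1
  have key : ∀ y ∈ F \ ρ₀, ∃ ρ, ρ ⊆ insert y ρ₀ ∧ ρ ≠ ρ₀ ∧ X.cobdry φ ρ ≠ 0 := by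
    intro y hy
    rw [Finset.mem_sdiff] at hy
    have hηF : insert y ρ₀ ⊆ F := by
      intro x hx; rcases Finset.mem_insert.mp hx with rfl | hx
      · exact hy.1
      · exact hρ₀F hx
    have hηf : insert y ρ₀ ∈ X.faces := X.down_closed F hFf _ hηF
    have hzero : X.cobdry (X.cobdry φ) (insert y ρ₀) = 0 := by rw [cobdry_cobdry]; rfl
    rw [SCplx.cobdry, if_pos hηf] at hzero
    by_contra hno
    push_neg at hno
    have hsum : ∑ ρ ∈ X.faces.filter
        (fun ρ => ρ ⊆ insert y ρ₀ ∧ ρ.card + 1 = (insert y ρ₀).card), X.cobdry φ ρ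
        = X.cobdry φ ρ₀ := by
      apply Finset.sum_eq_single_of_mem
      · rw [Finset.mem_filter]
        exact ⟨hρ₀f, Finset.subset_insert _ _,
          by rw [Finset.card_insert_of_notMem hy.2]⟩
      · intro ρ hρ hne
        rw [Finset.mem_filter] at hρ
        exact hno ρ hρ.2.1 hne
    rw [hsum] at hzero
    exact hρ₀ hzero
  choose f hf1 hf2 hf3 using key
  have hyρ : ∀ y (h : y ∈ F \ ρ₀), y ∈ f y h := by
    intro y h
    by_contra hyn
    have hsub : f y h ⊆ ρ₀ := by
      intro x hx
      rcases Finset.mem_insert.mp (hf1 y h hx) with rfl | hx2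
      · exact absurd hx hyn
      · exact hx2
    have hc : (f y h).card = k + 2 := (mem_cfaces.mp (hgr _ (hf3 y h))).2
    exact hf2 y h (Finset.eq_of_subset_of_card_le hsub (by omega))
  set T := F.powerset.filter (fun ρ => X.cobdry φ ρ ≠ 0) with hT
  have hρ₀T : ρ₀ ∈ T := by
    rw [hT, Finset.mem_filter, Finset.mem_powerset]; exact ⟨hρ₀F, hρ₀⟩
  let f' : V → Finset V := fun y => if h : y ∈ F \ ρ₀ then f y h else ∅
  have hmaps : ∀ y ∈ F \ ρ₀, f' y ∈ T.erase ρ₀ := by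
    intro y hy
    have hy' := hy
    rw [Finset.mem_sdiff] at hy'
    rw [Finset.mem_erase]
    simp only [f', dif_pos hy]
    refine ⟨hf2 y hy, ?_⟩
    rw [hT, Finset.mem_filter, Finset.mem_powerset]
    refine ⟨?_, hf3 y hy⟩
    intro x hx
    rcases Finset.mem_insert.mp (hf1 y hy hx) with rfl | hx2
    · exact hy'.1
    · exact hρ₀F hx2
  have hinj : Set.InjOn f' ↑(F \ ρ₀) := by
    intro a ha b hb hab
    rw [Finset.mem_coe] at ha hb
    simp only [f', dif_pos ha, dif_pos hb] at hab
    have hbmem : b ∈ f a ha := by rw [hab]; exact hyρ b hb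
    rcases Finset.mem_insert.mp (hf1 a ha hbmem) with h | h
    · exact h.symm
    · rw [Finset.mem_sdiff] at hb; exact absurd h hb.2
  have hcard := Finset.card_le_card_of_injOn f' hmaps hinj
  have h1 : (F \ ρ₀).card = n - k - 1 := by
    rw [Finset.card_sdiff_of_subset hρ₀F, hFc, hρ₀c]
    omega
  have h2 : (T.erase ρ₀).card = T.card - 1 := Finset.card_erase_of_mem hρ₀T
  have h3 : 1 ≤ T.card := Finset.card_pos.mpr ⟨ρ₀, hρ₀T⟩
  omega

end Stmt0Aux
namespace Stmt0Aux

open SCplx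

variable {V : Type} [DecidableEq V]

lemma sum_deg_cfaces (X : SCplx V) (n m : ℕ) :
    ∑ τ ∈ X.cfaces m, degT X n τ = (X.cfaces (n + 1)).card * (n + 1).choose m := by
  have h1 : ∀ τ ∈ X.cfaces m, degT X n τ =
      ∑ F ∈ X.cfaces (n + 1), if τ ⊆ F then 1 else 0 := by
    intro τ _; rw [degT, Finset.card_filter]
  rw [Finset.sum_congr rfl h1, Finset.sum_comm]
  have hper : ∀ F ∈ X.cfaces (n + 1),
      (∑ τ ∈ X.cfaces m, if τ ⊆ F then (1 : ℕ) else 0) = (n + 1).choose m := by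
    intro F hF
    rw [← Finset.card_filter]
    have h2 : (X.cfaces m).filter (fun τ => τ ⊆ F) = F.powersetCard m := by
      ext τ
      rw [Finset.mem_filter, mem_cfaces, Finset.mem_powersetCard]
      constructor
      · rintro ⟨⟨_, hc⟩, hs⟩; exact ⟨hs, hc⟩
      · rintro ⟨hs, hc⟩
        exact ⟨⟨X.down_closed F (mem_cfaces.mp hF).1 τ hs, hc⟩, hs⟩
    rw [h2, Finset.card_powersetCard, (mem_cfaces.mp hF).2]
  rw [Finset.sum_congr rfl hper, Finset.sum_const, smul_eq_mul]

lemma sum_deg_eq (X : SCplx V) (n : ℕ) (S : Finset (Finset V)) :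
    ∑ ρ ∈ S, degT X n ρ = ∑ F ∈ X.cfaces (n + 1), (S.filter (fun ρ => ρ ⊆ F)).card := by
  have h1 : ∀ ρ ∈ S, degT X n ρ = ∑ F ∈ X.cfaces (n + 1), if ρ ⊆ F then 1 else 0 := by
    intro ρ _; rw [degT, Finset.card_filter]
  rw [Finset.sum_congr rfl h1, Finset.sum_comm]
  exact Finset.sum_congr rfl fun F _ => (Finset.card_filter _ _).symm

section Counting

variable {G : Type} [Group G] [Fintype G] (ρ : G →* Equiv.Perm V)

lemma cnt_bound (X : SCplx V) (n : ℕ) (hpure : X.Pure n)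
    (hface : ∀ (g : G), ∀ σ ∈ X.faces, σ.image (ρ g) ∈ X.faces)
    (htrans : ∀ σ ∈ X.cfaces (n + 1), ∀ τ ∈ X.cfaces (n + 1), ∃ g : G, σ.image (ρ g) = τ)
    (S B : Finset (Finset V))
    (hSB : ∀ σ ∈ S, ∀ F ∈ X.cfaces (n + 1), σ ⊆ F → F ∈ B)
    (hB : B ⊆ X.cfaces (n + 1))
    {σ'' : Finset V} (hσ'' : σ'' ∈ X.faces) :
    (X.cfaces (n + 1)).card * (Finset.univ.filter (fun g : G => ag ρ g σ'' ∈ S)).card ≤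
      Fintype.card G * B.card := by
  classical
  set N := (X.cfaces (n + 1)).card with hN
  set d := degT X n σ'' with hdd
  have hd : 1 ≤ d := by
    obtain ⟨F, hF, hsub⟩ := hpure σ'' hσ''
    exact Finset.card_pos.mpr ⟨F, Finset.mem_filter.mpr ⟨hF, hsub⟩⟩
  set K : Finset V → ℕ := fun F => (Finset.univ.filter (fun g : G => ag ρ g σ'' ⊆ F)).card
    with hK
  have hKeq : ∀ F ∈ X.cfaces (n + 1), ∀ F' ∈ X.cfaces (n + 1), K F = K F' := by
    intro F hF F' hF'
    obtain ⟨h, hh⟩ := htrans F' hF' F hF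
    have hh' : ag ρ h F' = F := hh
    refine Finset.card_bij' (fun g _ => h⁻¹ * g) (fun g _ => h * g) ?_ ?_ ?_ ?_
    · intro g hg
      rw [Finset.mem_filter] at hg ⊢
      refine ⟨Finset.mem_univ _, ?_⟩
      have h2 : ag ρ h⁻¹ (ag ρ g σ'') ⊆ ag ρ h⁻¹ (ag ρ h F') :=
        (ag_subset_iff ρ).mpr (hh' ▸ hg.2)
      rwa [ag_ag, ag_inv_ag] at h2
    · intro g hg
      rw [Finset.mem_filter] at hg ⊢
      refine ⟨Finset.mem_univ _, ?_⟩
      have h2 : ag ρ h (ag ρ g σ'') ⊆ ag ρ h F' := (ag_subset_iff ρ).mpr hg.2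
      rwa [ag_ag, hh'] at h2
    · intro g _
      show h * (h⁻¹ * g) = g
      rw [← mul_assoc, mul_inv_cancel, one_mul]
    · intro g _
      show h⁻¹ * (h * g) = g
      rw [← mul_assoc, inv_mul_cancel, one_mul]
  have hNK : ∀ F ∈ X.cfaces (n + 1), N * K F = Fintype.card G * d := by
    intro F hF
    have h1 : ∑ F' ∈ X.cfaces (n + 1), K F' = N * K F := by
      rw [Finset.sum_congr rfl (fun F' hF' => hKeq F' hF' F hF), Finset.sum_const, smul_eq_mul]
    have h2 : ∑ F' ∈ X.cfaces (n + 1), K F' = ∑ g : G, degT X n (ag ρ g σ'') := by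
      have ha : ∀ F' ∈ X.cfaces (n + 1), K F' =
          ∑ g : G, if ag ρ g σ'' ⊆ F' then 1 else 0 := by
        intro F' _; exact Finset.card_filter _ _
      have hb : ∀ g : G, degT X n (ag ρ g σ'') =
          ∑ F' ∈ X.cfaces (n + 1), if ag ρ g σ'' ⊆ F' then 1 else 0 := by
        intro g; rw [degT, Finset.card_filter]
      rw [Finset.sum_congr rfl ha, Finset.sum_comm, Finset.sum_congr rfl (fun g _ => (hb g).symm)]
    have h3 : ∑ g : G, degT X n (ag ρ g σ'') = Fintype.card G * d := by
      rw [Finset.sum_congr rfl (fun g _ => deg_ag ρ X hface n g σ''), Finset.sum_const,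
        smul_eq_mul, Finset.card_univ]
    rw [← h1, h2, h3]
  set cnt := (Finset.univ.filter (fun g : G => ag ρ g σ'' ∈ S)).card with hcntdef
  have hcnt : cnt * d ≤ ∑ F ∈ B, K F := by
    have c1 : cnt * d = ∑ g ∈ Finset.univ.filter (fun g : G => ag ρ g σ'' ∈ S), d := by
      rw [Finset.sum_const, smul_eq_mul]
    have c2 : ∀ g ∈ Finset.univ.filter (fun g : G => ag ρ g σ'' ∈ S),
        d = (B.filter (fun F => ag ρ g σ'' ⊆ F)).card := by
      intro g hg
      rw [Finset.mem_filter] at hg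
      have hdg : d = degT X n (ag ρ g σ'') := (deg_ag ρ X hface n g σ'').symm
      rw [hdg, degT]
      congr 1
      ext F
      rw [Finset.mem_filter, Finset.mem_filter]
      constructor
      · rintro ⟨hF, hsub⟩; exact ⟨hSB _ hg.2 F hF hsub, hsub⟩
      · rintro ⟨hF, hsub⟩; exact ⟨hB hF, hsub⟩
    have c3 : ∑ g ∈ Finset.univ.filter (fun g : G => ag ρ g σ'' ∈ S),
        (B.filter (fun F => ag ρ g σ'' ⊆ F)).card ≤
        ∑ g : G, (B.filter (fun F => ag ρ g σ'' ⊆ F)).card :=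
      Finset.sum_le_sum_of_subset (Finset.filter_subset _ _)
    have c4 : ∑ g : G, (B.filter (fun F => ag ρ g σ'' ⊆ F)).card = ∑ F ∈ B, K F := by
      have ha : ∀ g : G, (B.filter (fun F => ag ρ g σ'' ⊆ F)).card =
          ∑ F ∈ B, if ag ρ g σ'' ⊆ F then 1 else 0 := by
        intro g; rw [Finset.card_filter]
      have hb : ∀ F ∈ B, K F = ∑ g : G, if ag ρ g σ'' ⊆ F then 1 else 0 := by
        intro F _; exact Finset.card_filter _ _
      rw [Finset.sum_congr rfl (fun g _ => ha g), Finset.sum_comm,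
        Finset.sum_congr rfl (fun F hF => (hb F hF).symm)]
    calc cnt * d = ∑ g ∈ Finset.univ.filter (fun g : G => ag ρ g σ'' ∈ S), d := c1
      _ = ∑ g ∈ Finset.univ.filter (fun g : G => ag ρ g σ'' ∈ S),
          (B.filter (fun F => ag ρ g σ'' ⊆ F)).card := Finset.sum_congr rfl c2
      _ ≤ ∑ g : G, (B.filter (fun F => ag ρ g σ'' ⊆ F)).card := c3
      _ = ∑ F ∈ B, K F := c4
  have hfinal : (N * cnt) * d ≤ (Fintype.card G * B.card) * d := by
    calc (N * cnt) * d = N * (cnt * d) := by ring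
      _ ≤ N * ∑ F ∈ B, K F := Nat.mul_le_mul_left N hcnt
      _ = ∑ F ∈ B, N * K F := by rw [Finset.mul_sum]
      _ = ∑ F ∈ B, Fintype.card G * d := Finset.sum_congr rfl (fun F hF => hNK F (hB hF))
      _ = B.card * (Fintype.card G * d) := by rw [Finset.sum_const, smul_eq_mul]
      _ = (Fintype.card G * B.card) * d := by ring
  exact Nat.le_of_mul_le_mul_right hfinal hd

end Counting

end Stmt0Aux
namespace Stmt0Aux

open SCplx

variable {V : Type} [DecidableEq V]

lemma pair_sum (X : SCplx V) (φ : Finset V → ZMod 2) {α : Type*} (s : Finset α)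
    (c : α → Finset V → ZMod 2) :
    X.pair φ (∑ a ∈ s, c a) = ∑ a ∈ s, X.pair φ (c a) := by
  rw [SCplx.pair]
  have h1 : ∀ τ ∈ X.faces, φ τ * (∑ a ∈ s, c a) τ = ∑ a ∈ s, φ τ * c a τ := by
    intro τ _; rw [Finset.sum_apply, Finset.mul_sum]
  rw [Finset.sum_congr rfl h1, Finset.sum_comm]
  exact Finset.sum_congr rfl fun a _ => rfl

section ConeConj

variable {G : Type} [Group G] (ρ : G →* Equiv.Perm V) (X : SCplx V) {K : ℕ} {v : V}

lemma coneFun_zero (Cf : ConeFun X K v) : Cf.toFun 0 = 0 := by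
  have h := Cf.map_add 0 0
  rw [add_zero] at h
  exact (left_eq_add.mp h)

lemma coneFun_sum (Cf : ConeFun X K v) {α : Type*} (s : Finset α)
    (c : α → Finset V → ZMod 2) :
    Cf.toFun (∑ a ∈ s, c a) = ∑ a ∈ s, Cf.toFun (c a) := by
  classical
  induction s using Finset.induction_on with
  | empty => simpa using coneFun_zero X Cf
  | insert _ _ ha ih =>
      rw [Finset.sum_insert ha, Finset.sum_insert ha, Cf.map_add, ih]

lemma pg_sum (g : G) {α : Type*} (s : Finset α) (c : α → Finset V → ZMod 2) :
    pg ρ g (∑ a ∈ s, c a) = ∑ a ∈ s, pg ρ g (c a) := by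
  funext σ
  rw [pg_apply, Finset.sum_apply, Finset.sum_apply]
  exact Finset.sum_congr rfl fun a _ => rfl

/-- conjugated cone obeys the cone equation (at the top level `K`). -/
lemma cone_eq_conj (hface : ∀ (g : G), ∀ σ ∈ X.faces, σ.image (ρ g) ∈ X.faces)
    (Cf : ConeFun X K v) (hK : 1 ≤ K) (g : G) {c : Finset V → ZMod 2}
    (hc : X.IsGraded K c) :
    X.bdry (pg ρ g (Cf.toFun (pg ρ g⁻¹ c))) = c + pg ρ g (Cf.toFun (pg ρ g⁻¹ (X.bdry c))) := by
  rw [bdry_pg ρ X hface, Cf.cone_eq K hK le_rfl _ (graded_pg ρ X hface g⁻¹ hc),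
    pg_add, pg_pg_inv, bdry_pg ρ X hface]

end ConeConj

end Stmt0Aux
namespace Stmt0Aux

open SCplx

variable {V : Type} [DecidableEq V]

section Psi

variable {G : Type} [Group G] (ρ : G →* Equiv.Perm V) (X : SCplx V)

/-- the cochain `ψ_g = φ ∘ Cone_g` -/
noncomputable def psiF {K : ℕ} {v : V} (Cf : ConeFun X K v) (φ : Finset V → ZMod 2)
    (kk : ℕ) (g : G) : Finset V → ZMod 2 :=
  fun α => if α ∈ X.cfaces kk then X.pair φ (pg ρ g (Cf.toFun (pg ρ g⁻¹ (sChain α)))) else 0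

lemma psiF_graded {K : ℕ} {v : V} (Cf : ConeFun X K v) (φ : Finset V → ZMod 2)
    (kk : ℕ) (g : G) : X.IsGraded kk (psiF ρ X Cf φ kk g) := by
  intro α hα
  by_contra h
  exact hα (if_neg h)

lemma key_identity (hface : ∀ (g : G), ∀ σ ∈ X.faces, σ.image (ρ g) ∈ X.faces)
    {k : ℕ} {v : V} (Cf : ConeFun X (k + 1) v)
    (φ : Finset V → ZMod 2) (g : G) {τ : Finset V} (hτ : τ ∈ X.cfaces (k + 1)) :
    (φ + X.cobdry (psiF ρ X Cf φ k g)) τ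
      = X.pair (X.cobdry φ) (pg ρ g (Cf.toFun (pg ρ g⁻¹ (sChain τ)))) := by
  have hτf : τ ∈ X.faces := (mem_cfaces.mp hτ).1
  have hτc : τ.card = k + 1 := (mem_cfaces.mp hτ).2
  have hgr : X.IsGraded (k + 1) (sChain τ) := sChain_graded hτ
  have hcone := cone_eq_conj ρ X hface Cf (Nat.succ_le_succ (Nat.zero_le k)) g hgr
  have hψ : X.cobdry (psiF ρ X Cf φ k g) τ
      = X.pair φ (pg ρ g (Cf.toFun (pg ρ g⁻¹ (X.bdry (sChain τ))))) := by
    have e0 : X.cobdry (psiF ρ X Cf φ k g) τ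
        = ∑ α ∈ X.faces.filter (fun α => α ⊆ τ ∧ α.card + 1 = τ.card),
            psiF ρ X Cf φ k g α := by
      show (if τ ∈ X.faces then _ else 0) = _
      rw [if_pos hτf]
    have hset : X.faces.filter (fun α => α ⊆ τ ∧ α.card + 1 = τ.card)
        = τ.powerset.filter (fun α => α.card + 1 = τ.card) := by
      ext α
      simp only [Finset.mem_filter, Finset.mem_powerset]
      constructor
      · rintro ⟨_, h1, h2⟩; exact ⟨h1, h2⟩
      · rintro ⟨h1, h2⟩; exact ⟨X.down_closed τ hτf α h1, h1, h2⟩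
    have hval : ∀ α ∈ τ.powerset.filter (fun α => α.card + 1 = τ.card),
        psiF ρ X Cf φ k g α = X.pair φ (pg ρ g (Cf.toFun (pg ρ g⁻¹ (sChain α)))) := by
      intro α hα
      rw [Finset.mem_filter, Finset.mem_powerset] at hα
      have hαm : α ∈ X.cfaces k :=
        mem_cfaces.mpr ⟨X.down_closed τ hτf α hα.1, by omega⟩
      show (if α ∈ X.cfaces k then _ else 0) = _
      rw [if_pos hαm]
    rw [e0, hset, Finset.sum_congr rfl hval, bdry_sChain X hτf, pg_sum, coneFun_sum,
      pg_sum, pair_sum]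
  have hfin : X.pair (X.cobdry φ) (pg ρ g (Cf.toFun (pg ρ g⁻¹ (sChain τ))))
      = φ τ + X.cobdry (psiF ρ X Cf φ k g) τ := by
    calc X.pair (X.cobdry φ) (pg ρ g (Cf.toFun (pg ρ g⁻¹ (sChain τ))))
        = X.pair φ (X.bdry (pg ρ g (Cf.toFun (pg ρ g⁻¹ (sChain τ))))) :=
          (pair_bdry X φ _).symm
      _ = X.pair φ (sChain τ + pg ρ g (Cf.toFun (pg ρ g⁻¹ (X.bdry (sChain τ))))) := by
          rw [hcone]
      _ = X.pair φ (sChain τ)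
          + X.pair φ (pg ρ g (Cf.toFun (pg ρ g⁻¹ (X.bdry (sChain τ))))) := pair_add X φ _ _
      _ = φ τ + X.cobdry (psiF ρ X Cf φ k g) τ := by rw [pair_sChain X φ hτf, hψ]
  rw [Pi.add_apply, hfin]

end Psi

end Stmt0Aux

open Stmt0Aux

set_option maxHeartbeats 1000000 in
open SCplx in
/-- For a pure finite `n`-dimensional strongly symmetric simplicial complex,
if the `k`-th cone radius is finite and equal to `D`, then
`Exp^k_b(X) ≥ 1/(C(n+1,k+1)·Crad_k(X))`, stated pointwise: for every `k`-cochain `φ ∉ B^k(X)`,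
`(1/(C(n+1,k+1)·D)) · dist(φ, B^k(X)) ≤ w(d_k φ)`. -/
theorem stmt0 {V : Type} [DecidableEq V] (n : ℕ) (X : SCplx V) (hpure : X.Pure n)
    {G : Type} [Group G] [Fintype G] (ρ : G →* Equiv.Perm V)
    (hface : ∀ (g : G), ∀ σ ∈ X.faces, σ.image (ρ g) ∈ X.faces)
    (htrans : ∀ σ ∈ X.cfaces (n + 1), ∀ τ ∈ X.cfaces (n + 1), ∃ g : G, σ.image (ρ g) = τ)
    (k : ℕ) (hk : k < n) (D : ℕ) (hD : X.Crad (k + 1) = (D : ℕ∞)) :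
    ∀ φ : Finset V → ZMod 2, X.IsGraded (k + 1) φ → ¬X.IsCoboundary k φ →
      (1 / (((n + 1).choose (k + 1) : ℝ) * (D : ℝ))) *
          sInf {r : ℝ | ∃ ψ, X.IsCoboundary k ψ ∧ r = X.wC n (φ + ψ)} ≤
        X.wC n (X.cobdry φ) := by
  classical
  intro φ hφ hncb
  have hwnonneg : ∀ τ, 0 ≤ X.w n τ := fun τ => by
    rw [w_eq_deg]; positivity
  have hwCnonneg : ∀ c, 0 ≤ X.wC n c := fun c => Finset.sum_nonneg fun τ _ => hwnonneg τ
  by_cases hD0 : D = 0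
  · subst hD0
    rw [Nat.cast_zero, mul_zero, div_zero, zero_mul]
    exact hwCnonneg _
  obtain ⟨v, Cf, hVol⟩ : ∃ (v : V) (Cf : ConeFun X (k + 1) v), Cf.Vol ≤ D := by
    have h1 : X.Crad (k + 1) < ((D + 1 : ℕ) : ℕ∞) := by
      rw [hD]
      exact_mod_cast Nat.lt_succ_self D
    rw [SCplx.Crad, iInf_lt_iff] at h1
    obtain ⟨v, h1⟩ := h1
    rw [iInf_lt_iff] at h1
    obtain ⟨Cf, h1⟩ := h1
    refine ⟨v, Cf, ?_⟩
    have h2 : (Cf.Vol : ℕ∞) < ((D + 1 : ℕ) : ℕ∞) := h1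
    rw [Nat.cast_lt] at h2
    omega
  set C1 := (n + 1).choose (k + 1) with hC1def
  set C2 := (n + 1).choose (k + 2) with hC2def
  set N := (X.cfaces (n + 1)).card with hNdef
  set dφ := X.cobdry φ with hdφdef
  set S := X.supp dφ with hSdef
  set B := (X.cfaces (n + 1)).filter (fun F => ∃ ρ' ∈ F.powerset, dφ ρ' ≠ 0) with hBdef
  have hC1pos : 0 < C1 := Nat.choose_pos (by omega)
  have hC2pos : 0 < C2 := Nat.choose_pos (by omega)
  have hNpos : 0 < N := by
    obtain ⟨F, hF, -⟩ := hpure ∅ X.empty_mem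
    exact Finset.card_pos.mpr ⟨F, hF⟩
  have hDpos : (0 : ℝ) < (D : ℝ) := by exact_mod_cast Nat.pos_of_ne_zero hD0
  have hNposR : (0 : ℝ) < (N : ℝ) := by exact_mod_cast hNpos
  have hdφgr : X.IsGraded (k + 2) dφ := cobdry_graded hφ
  have hBsub : B ⊆ X.cfaces (n + 1) := Finset.filter_subset _ _
  have hSB : ∀ σ ∈ S, ∀ F ∈ X.cfaces (n + 1), σ ⊆ F → F ∈ B := by
    intro σ hσ F hF hsub
    rw [hSdef, SCplx.supp, Finset.mem_filter] at hσ
    exact Finset.mem_filter.mpr ⟨hF, σ, Finset.mem_powerset.mpr hsub, hσ.2⟩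
  have hSfaces : ∀ σ ∈ S, σ ∈ X.faces := fun σ hσ => (Finset.mem_filter.mp hσ).1
  have hdegB : (n - k) * B.card ≤ ∑ r ∈ S, degT X n r := by
    rw [sum_deg_eq]
    have hperF : ∀ F ∈ B, n - k ≤ (S.filter (fun r => r ⊆ F)).card := by
      intro F hF
      have hFB := Finset.mem_filter.mp hF
      obtain ⟨ρ₀, hρ₀pow, hρ₀⟩ := hFB.2
      have hseteq : S.filter (fun r => r ⊆ F) = F.powerset.filter (fun r => dφ r ≠ 0) := by
        ext r
        rw [Finset.mem_filter, Finset.mem_filter, Finset.mem_powerset, hSdef, SCplx.supp,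
          Finset.mem_filter]
        constructor
        · rintro ⟨⟨_, h2⟩, h3⟩; exact ⟨h3, h2⟩
        · rintro ⟨h1, h2⟩
          exact ⟨⟨X.down_closed F (mem_cfaces.mp hFB.1).1 r h1, h2⟩, h1⟩
      rw [hseteq]
      exact simplex_lb X hk hφ hFB.1 (Finset.mem_powerset.mp hρ₀pow) hρ₀
    calc (n - k) * B.card = ∑ _F ∈ B, (n - k) := by rw [Finset.sum_const, smul_eq_mul, mul_comm]
      _ ≤ ∑ F ∈ B, (S.filter (fun r => r ⊆ F)).card := Finset.sum_le_sum hperF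
      _ ≤ ∑ F ∈ X.cfaces (n + 1), (S.filter (fun r => r ⊆ F)).card :=
          Finset.sum_le_sum_of_subset hBsub
  have hwdeq : X.wC n dφ = ((∑ r ∈ S, degT X n r : ℕ) : ℝ) / ((C2 : ℝ) * (N : ℝ)) := by
    rw [SCplx.wC, Nat.cast_sum, Finset.sum_div]
    refine Finset.sum_congr rfl fun r hr => ?_
    have hc : r.card = k + 2 := (mem_cfaces.mp (hdφgr r (Finset.mem_filter.mp hr).2)).2
    rw [w_eq_deg, hc]
  have hvolD : ∀ τ' ∈ X.cfaces (k + 1),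
      ((X.supp (Cf.toFun (sChain τ'))).card : ℝ) ≤ (D : ℝ) := by
    intro τ' hτ'
    have h1 : X.chainCard (Cf.toFun (sChain τ')) ≤ Cf.Vol :=
      Finset.le_sup (f := fun τ => X.chainCard (Cf.toFun (sChain τ))) hτ'
    exact_mod_cast h1.trans hVol
  have hcntR : ∀ σ'' ∈ X.faces,
      ((Finset.univ.filter (fun g : G => ag ρ g σ'' ∈ S)).card : ℝ)
        ≤ (Fintype.card G : ℝ) * (B.card : ℝ) / (N : ℝ) := by
    intro σ'' hσ''
    rw [le_div_iff₀ hNposR]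
    have h0 := cnt_bound ρ X n hpure hface htrans S B hSB hBsub hσ''
    calc ((Finset.univ.filter (fun g : G => ag ρ g σ'' ∈ S)).card : ℝ) * N
        = ((N * (Finset.univ.filter (fun g : G => ag ρ g σ'' ∈ S)).card : ℕ) : ℝ) := by
          push_cast; ring
      _ ≤ ((Fintype.card G * B.card : ℕ) : ℝ) := by exact_mod_cast h0
      _ = (Fintype.card G : ℝ) * (B.card : ℝ) := by push_cast; ring
  have hsupp : ∀ g : G, X.supp (φ + X.cobdry (psiF ρ X Cf φ k g)) ⊆
      (X.cfaces (k + 1)).filter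
        (fun τ => X.pair dφ (pg ρ g (Cf.toFun (pg ρ g⁻¹ (sChain τ)))) ≠ 0) := by
    intro g τ hτ
    rw [SCplx.supp, Finset.mem_filter] at hτ
    have hgr2 : X.IsGraded (k + 1) (φ + X.cobdry (psiF ρ X Cf φ k g)) :=
      graded_add hφ (cobdry_graded (psiF_graded ρ X Cf φ k g))
    have hmem : τ ∈ X.cfaces (k + 1) := hgr2 τ hτ.2
    refine Finset.mem_filter.mpr ⟨hmem, ?_⟩
    rw [hdφdef, ← key_identity ρ X hface Cf φ g hmem]
    exact hτ.2
  have hPerG : ∀ g : G, X.wC n (φ + X.cobdry (psiF ρ X Cf φ k g)) ≤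
      ∑ τ' ∈ X.cfaces (k + 1), X.w n τ' *
        ∑ σ'' ∈ X.supp (Cf.toFun (sChain τ')), (if ag ρ g σ'' ∈ S then (1 : ℝ) else 0) := by
    intro g
    have st1 : X.wC n (φ + X.cobdry (psiF ρ X Cf φ k g)) ≤
        ∑ τ ∈ (X.cfaces (k + 1)).filter
          (fun τ => X.pair dφ (pg ρ g (Cf.toFun (pg ρ g⁻¹ (sChain τ)))) ≠ 0), X.w n τ :=
      Finset.sum_le_sum_of_subset_of_nonneg (hsupp g) (fun τ _ _ => hwnonneg τ)
    have st2 : ∑ τ ∈ (X.cfaces (k + 1)).filter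
          (fun τ => X.pair dφ (pg ρ g (Cf.toFun (pg ρ g⁻¹ (sChain τ)))) ≠ 0), X.w n τ
        = ∑ τ' ∈ (X.cfaces (k + 1)).filter
          (fun τ' => X.pair dφ (pg ρ g (Cf.toFun (sChain τ'))) ≠ 0), X.w n τ' := by
      refine Finset.sum_bij' (fun τ _ => ag ρ g⁻¹ τ) (fun τ' _ => ag ρ g τ') ?_ ?_ ?_ ?_ ?_
      · intro τ hτ
        rw [Finset.mem_filter] at hτ ⊢
        refine ⟨(ag_mem_cfaces_iff ρ X hface g⁻¹ τ (k + 1)).mpr hτ.1, ?_⟩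
        have h2 := hτ.2
        rwa [pg_sChain] at h2
      · intro τ' hτ'
        rw [Finset.mem_filter] at hτ' ⊢
        refine ⟨(ag_mem_cfaces_iff ρ X hface g τ' (k + 1)).mpr hτ'.1, ?_⟩
        rw [pg_sChain, ag_inv_ag]
        exact hτ'.2
      · exact fun τ _ => ag_ag_inv ρ g τ
      · exact fun τ' _ => ag_inv_ag ρ g τ'
      · exact fun τ _ => (w_ag ρ X hface n g⁻¹ τ).symm
    have st3 : ∀ τ' ∈ (X.cfaces (k + 1)).filter
        (fun τ' => X.pair dφ (pg ρ g (Cf.toFun (sChain τ'))) ≠ 0),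
        (1 : ℝ) ≤ ∑ σ'' ∈ X.supp (Cf.toFun (sChain τ')),
          (if ag ρ g σ'' ∈ S then (1 : ℝ) else 0) := by
      intro τ' hτ'
      rw [Finset.mem_filter] at hτ'
      have hp := hτ'.2
      rw [SCplx.pair] at hp
      obtain ⟨σ, hσf, hσ0⟩ := Finset.exists_ne_zero_of_sum_ne_zero hp
      have hmul := mul_ne_zero_iff.mp hσ0
      have hσ''mem : ag ρ g⁻¹ σ ∈ X.supp (Cf.toFun (sChain τ')) := by
        rw [SCplx.supp, Finset.mem_filter]
        exact ⟨(ag_mem_faces_iff ρ X hface g⁻¹ σ).mpr hσf, hmul.2⟩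
      have hagS : ag ρ g (ag ρ g⁻¹ σ) ∈ S := by
        rw [ag_ag_inv, hSdef, SCplx.supp, Finset.mem_filter]
        exact ⟨hσf, hmul.1⟩
      have h5 := Finset.single_le_sum
        (f := fun σ'' => if ag ρ g σ'' ∈ S then (1 : ℝ) else 0)
        (fun i _ => by positivity) hσ''mem
      exact le_trans (by simp [hagS]) h5
    calc X.wC n (φ + X.cobdry (psiF ρ X Cf φ k g)) ≤ _ := st1
      _ = _ := st2
      _ ≤ ∑ τ' ∈ (X.cfaces (k + 1)).filter
          (fun τ' => X.pair dφ (pg ρ g (Cf.toFun (sChain τ'))) ≠ 0),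
          X.w n τ' * ∑ σ'' ∈ X.supp (Cf.toFun (sChain τ')),
            (if ag ρ g σ'' ∈ S then (1 : ℝ) else 0) := by
          refine Finset.sum_le_sum fun τ' hτ' => ?_
          exact le_mul_of_one_le_right (hwnonneg τ') (st3 τ' hτ')
      _ ≤ ∑ τ' ∈ X.cfaces (k + 1), X.w n τ' *
            ∑ σ'' ∈ X.supp (Cf.toFun (sChain τ')),
              (if ag ρ g σ'' ∈ S then (1 : ℝ) else 0) := by
          refine Finset.sum_le_sum_of_subset_of_nonneg (Finset.filter_subset _ _) ?_
          intro τ' _ _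
          have h6 : (0 : ℝ) ≤ ∑ σ'' ∈ X.supp (Cf.toFun (sChain τ')),
              (if ag ρ g σ'' ∈ S then (1 : ℝ) else 0) :=
            Finset.sum_nonneg fun i _ => by positivity
          exact mul_nonneg (hwnonneg τ') h6
  have hsumw1 : ∑ τ' ∈ X.cfaces (k + 1), X.w n τ' = 1 := by
    have h1 : ∀ τ' ∈ X.cfaces (k + 1), X.w n τ' = (degT X n τ' : ℝ) / ((C1 : ℝ) * (N : ℝ)) := by
      intro τ' hτ'
      rw [w_eq_deg, (mem_cfaces.mp hτ').2]
    rw [Finset.sum_congr rfl h1, ← Finset.sum_div, ← Nat.cast_sum, sum_deg_cfaces]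
    have h2 : ((N * C1 : ℕ) : ℝ) = (C1 : ℝ) * (N : ℝ) := by push_cast; ring
    rw [h2, div_self (by positivity)]
  have hGne : (0 : ℝ) < (Fintype.card G : ℝ) := by
    have h0 : 0 < Fintype.card G := Fintype.card_pos_iff.mpr ⟨1⟩
    exact_mod_cast h0
  have hsumG : ∑ g : G, X.wC n (φ + X.cobdry (psiF ρ X Cf φ k g)) ≤
      (Fintype.card G : ℝ) * ((D : ℝ) * (B.card : ℝ) / (N : ℝ)) := by
    calc ∑ g : G, X.wC n (φ + X.cobdry (psiF ρ X Cf φ k g))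
        ≤ ∑ g : G, ∑ τ' ∈ X.cfaces (k + 1), X.w n τ' *
          ∑ σ'' ∈ X.supp (Cf.toFun (sChain τ')), (if ag ρ g σ'' ∈ S then (1 : ℝ) else 0) :=
        Finset.sum_le_sum fun g _ => hPerG g
      _ = ∑ τ' ∈ X.cfaces (k + 1), ∑ g : G, X.w n τ' *
          ∑ σ'' ∈ X.supp (Cf.toFun (sChain τ')), (if ag ρ g σ'' ∈ S then (1 : ℝ) else 0) :=
        Finset.sum_comm
      _ = ∑ τ' ∈ X.cfaces (k + 1), X.w n τ' *
          ∑ σ'' ∈ X.supp (Cf.toFun (sChain τ')),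
            ((Finset.univ.filter (fun g : G => ag ρ g σ'' ∈ S)).card : ℝ) := by
        refine Finset.sum_congr rfl fun τ' _ => ?_
        rw [← Finset.mul_sum, Finset.sum_comm]
        congr 1
        refine Finset.sum_congr rfl fun σ'' _ => ?_
        rw [Finset.sum_boole]
      _ ≤ ∑ τ' ∈ X.cfaces (k + 1), X.w n τ' *
          ((D : ℝ) * ((Fintype.card G : ℝ) * (B.card : ℝ) / (N : ℝ))) := by
        refine Finset.sum_le_sum fun τ' hτ' => ?_
        refine mul_le_mul_of_nonneg_left ?_ (hwnonneg τ')
        have hb : ∀ σ'' ∈ X.supp (Cf.toFun (sChain τ')),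
            ((Finset.univ.filter (fun g : G => ag ρ g σ'' ∈ S)).card : ℝ)
              ≤ (Fintype.card G : ℝ) * (B.card : ℝ) / (N : ℝ) := by
          intro σ'' hσ''
          exact hcntR σ'' ((Finset.mem_filter.mp hσ'').1)
        calc ∑ σ'' ∈ X.supp (Cf.toFun (sChain τ')),
              ((Finset.univ.filter (fun g : G => ag ρ g σ'' ∈ S)).card : ℝ)
            ≤ ((X.supp (Cf.toFun (sChain τ'))).card : ℝ) *
              ((Fintype.card G : ℝ) * (B.card : ℝ) / (N : ℝ)) := by
              have h7 := Finset.sum_le_card_nsmul _ _ _ hb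
              rwa [nsmul_eq_mul] at h7
          _ ≤ (D : ℝ) * ((Fintype.card G : ℝ) * (B.card : ℝ) / (N : ℝ)) := by
              refine mul_le_mul_of_nonneg_right (hvolD τ' hτ') ?_
              positivity
      _ = (∑ τ' ∈ X.cfaces (k + 1), X.w n τ') *
          ((D : ℝ) * ((Fintype.card G : ℝ) * (B.card : ℝ) / (N : ℝ))) := by
        rw [Finset.sum_mul]
      _ = (Fintype.card G : ℝ) * ((D : ℝ) * (B.card : ℝ) / (N : ℝ)) := by
        rw [hsumw1, one_mul]; ring
  set I := sInf {r : ℝ | ∃ ψ, X.IsCoboundary k ψ ∧ r = X.wC n (φ + ψ)} with hI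
  have hIle : ∀ g : G, I ≤ X.wC n (φ + X.cobdry (psiF ρ X Cf φ k g)) := by
    intro g
    apply csInf_le
    · refine ⟨0, fun r hr => ?_⟩
      obtain ⟨ψ, _, rfl⟩ := hr
      exact hwCnonneg _
    · exact ⟨X.cobdry (psiF ρ X Cf φ k g),
        ⟨psiF ρ X Cf φ k g, psiF_graded ρ X Cf φ k g, rfl⟩, rfl⟩
  have hGI : (Fintype.card G : ℝ) * I ≤ ∑ g : G, X.wC n (φ + X.cobdry (psiF ρ X Cf φ k g)) := by
    have h1 : ∑ _g : G, I ≤ ∑ g : G, X.wC n (φ + X.cobdry (psiF ρ X Cf φ k g)) :=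
      Finset.sum_le_sum fun g _ => hIle g
    have h2 : ∑ _g : G, I = (Fintype.card G : ℝ) * I := by
      rw [Finset.sum_const, Finset.card_univ, nsmul_eq_mul]
    rw [← h2]
    exact h1
  have hI2 : I ≤ (D : ℝ) * (B.card : ℝ) / (N : ℝ) :=
    le_of_mul_le_mul_left (hGI.trans hsumG) hGne
  have hnk : (0 : ℝ) < ((n - k : ℕ) : ℝ) := by
    have h0 : 0 < n - k := by omega
    exact_mod_cast h0
  have hC2C1 : (C2 : ℝ) ≤ ((n - k : ℕ) : ℝ) * (C1 : ℝ) := by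
    have h1 : C2 * (k + 2) = C1 * (n - k) := by
      rw [hC1def, hC2def]
      have h0 := Nat.choose_succ_right_eq (n + 1) (k + 1)
      rw [show n + 1 - (k + 1) = n - k by omega] at h0
      exact h0
    have h2 : C2 ≤ (n - k) * C1 := by
      calc C2 ≤ C2 * (k + 2) := Nat.le_mul_of_pos_right _ (by omega)
        _ = C1 * (n - k) := h1
        _ = (n - k) * C1 := mul_comm _ _
    exact_mod_cast h2
  have hwd : ((n - k : ℕ) : ℝ) * (B.card : ℝ) ≤ X.wC n dφ * ((C2 : ℝ) * (N : ℝ)) := by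
    rw [hwdeq, div_mul_cancel₀ _ (by positivity)]
    exact_mod_cast hdegB
  have hBN : (B.card : ℝ) / (N : ℝ) ≤ (C1 : ℝ) * X.wC n dφ := by
    rw [div_le_iff₀ hNposR]
    have h3 : X.wC n dφ * ((C2 : ℝ) * (N : ℝ))
        ≤ X.wC n dφ * (((n - k : ℕ) : ℝ) * (C1 : ℝ) * (N : ℝ)) := by
      refine mul_le_mul_of_nonneg_left ?_ (hwCnonneg _)
      exact mul_le_mul_of_nonneg_right hC2C1 (le_of_lt hNposR)
    have h4 : ((n - k : ℕ) : ℝ) * (B.card : ℝ)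
        ≤ ((n - k : ℕ) : ℝ) * ((C1 : ℝ) * X.wC n dφ * (N : ℝ)) := by
      calc ((n - k : ℕ) : ℝ) * (B.card : ℝ) ≤ X.wC n dφ * ((C2 : ℝ) * (N : ℝ)) := hwd
        _ ≤ X.wC n dφ * (((n - k : ℕ) : ℝ) * (C1 : ℝ) * (N : ℝ)) := h3
        _ = ((n - k : ℕ) : ℝ) * ((C1 : ℝ) * X.wC n dφ * (N : ℝ)) := by ring
    exact le_of_mul_le_mul_left h4 hnk
  have hfinal : I ≤ ((C1 : ℝ) * (D : ℝ)) * X.wC n dφ := by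
    calc I ≤ (D : ℝ) * (B.card : ℝ) / (N : ℝ) := hI2
      _ = (D : ℝ) * ((B.card : ℝ) / (N : ℝ)) := by ring
      _ ≤ (D : ℝ) * ((C1 : ℝ) * X.wC n dφ) := by
          exact mul_le_mul_of_nonneg_left hBN (le_of_lt hDpos)
      _ = ((C1 : ℝ) * (D : ℝ)) * X.wC n dφ := by ring
  have hpos : (0 : ℝ) < (C1 : ℝ) * (D : ℝ) := by
    have h0 : (0 : ℝ) < (C1 : ℝ) := by exact_mod_cast hC1pos
    exact mul_pos h0 hDpos
  rw [one_div, inv_mul_le_iff₀ hpos]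
  exact hfinal
end

section
/- Let X be a pure finite n-dimensional simplicial complex. Define constants recursively by M_{-1} = 1 and M_k = Fill_k((k+1)·M_{k-1} + 1) for 0 ≤ k ≤ n−1. If for some 0 ≤ k ≤ n−1 one has Sys_j(X) > (j+1)·M_{j-1} + 1 for every 0 ≤ j ≤ k, then Crad_k(X) ≤ M_k. -/
open Finset

namespace SCplx

variable {V : Type} [DecidableEq V]

lemma chain_add_self (c : Finset V → ZMod 2) : c + c = 0 := by
  funext σ
  have : ∀ x : ZMod 2, x + x = 0 := by decide
  simp [this]

lemma sChain_apply (τ σ : Finset V) : sChain τ σ = if σ = τ then 1 else 0 := rfl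

/-- the set of codimension-1 subfaces of `τ`. -/
def subf (X : SCplx V) (τ : Finset V) : Finset (Finset V) :=
  X.faces.filter fun σ => σ ⊆ τ ∧ σ.card + 1 = τ.card

lemma bdry_add (X : SCplx V) (c d : Finset V → ZMod 2) :
    X.bdry (c + d) = X.bdry c + X.bdry d := by
  funext τ; simp [bdry, Finset.sum_add_distrib]

lemma bdry_smul (X : SCplx V) (r : ZMod 2) (c : Finset V → ZMod 2) :
    X.bdry (r • c) = r • X.bdry c := by
  funext τ; simp [bdry, Finset.mul_sum]

lemma bdry_sum (X : SCplx V) {ι : Type*} (s : Finset ι) (f : ι → (Finset V → ZMod 2)) :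
    X.bdry (∑ i ∈ s, f i) = ∑ i ∈ s, X.bdry (f i) := by
  classical
  induction s using Finset.cons_induction with
  | empty => funext τ; simp [bdry]
  | cons a s ha ih => rw [Finset.sum_cons, X.bdry_add, ih, Finset.sum_cons]

lemma bdry_sChain (X : SCplx V) {τ : Finset V} (hτ : τ ∈ X.faces) :
    X.bdry (sChain τ) = ∑ σ ∈ X.subf τ, sChain σ := by
  funext σ'
  rw [bdry, Finset.sum_apply]
  simp only [sChain_apply]
  rw [Finset.sum_ite_eq' _ τ (fun _ => (1 : ZMod 2))]
  rw [Finset.sum_ite_eq _ σ' (fun _ => (1 : ZMod 2))]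
  by_cases h1 : σ' ⊆ τ ∧ τ.card = σ'.card + 1
  · have hσ' : σ' ∈ X.faces := X.down_closed τ hτ σ' h1.1
    rw [if_pos, if_pos]
    · simp [subf, Finset.mem_filter, hσ', h1.1, h1.2.symm]
    · simp [Finset.mem_filter, hτ, h1.1, h1.2]
  · rw [if_neg, if_neg]
    · intro hmem
      simp only [subf, Finset.mem_filter] at hmem
      exact h1 ⟨hmem.2.1, hmem.2.2.symm⟩
    · intro hmem
      simp only [Finset.mem_filter] at hmem
      exact h1 ⟨hmem.2.1, hmem.2.2⟩

end SCplx

namespace SCplx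

set_option linter.unusedSectionVars false

variable {V : Type} [DecidableEq V]

lemma isGraded_add {X : SCplx V} {m : ℕ} {c d : Finset V → ZMod 2}
    (hc : X.IsGraded m c) (hd : X.IsGraded m d) : X.IsGraded m (c + d) := by
  intro σ hσ
  by_cases h : c σ ≠ 0
  · exact hc σ h
  · push_neg at h
    refine hd σ ?_
    intro h2; apply hσ; simp [Pi.add_apply, h, h2]

lemma isGraded_zero (X : SCplx V) (m : ℕ) : X.IsGraded m 0 := by
  intro σ hσ; simp at hσ

lemma isGraded_sum {X : SCplx V} {m : ℕ} {ι : Type*} {s : Finset ι}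
    {f : ι → (Finset V → ZMod 2)} (h : ∀ i ∈ s, X.IsGraded m (f i)) :
    X.IsGraded m (∑ i ∈ s, f i) := by
  classical
  induction s using Finset.cons_induction with
  | empty => simpa using X.isGraded_zero m
  | cons a s ha ih =>
      rw [Finset.sum_cons]
      exact isGraded_add (h a (Finset.mem_cons_self a s))
        (ih fun i hi => h i (Finset.mem_cons.2 (Or.inr hi)))

lemma isGraded_smul {X : SCplx V} {m : ℕ} {c : Finset V → ZMod 2} (r : ZMod 2)
    (hc : X.IsGraded m c) : X.IsGraded m (r • c) := by
  intro σ hσ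
  refine hc σ fun h => hσ ?_
  simp [Pi.smul_apply, h]

lemma isGraded_sChain {X : SCplx V} {τ : Finset V} (hτ : τ ∈ X.faces) :
    X.IsGraded τ.card (sChain τ) := by
  intro σ hσ
  rw [sChain_apply] at hσ
  by_cases h : σ = τ
  · subst h; simp [cfaces, Finset.mem_filter, hτ]
  · simp [h] at hσ

lemma supp_add_subset (X : SCplx V) (c d : Finset V → ZMod 2) :
    X.supp (c + d) ⊆ X.supp c ∪ X.supp d := by
  intro σ hσ
  simp only [supp, Finset.mem_filter, Finset.mem_union] at hσ ⊢
  by_cases h : c σ = 0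
  · refine Or.inr ⟨hσ.1, ?_⟩
    intro h2; apply hσ.2; simp [Pi.add_apply, h, h2]
  · exact Or.inl ⟨hσ.1, h⟩

lemma chainCard_add_le (X : SCplx V) (c d : Finset V → ZMod 2) :
    X.chainCard (c + d) ≤ X.chainCard c + X.chainCard d :=
  le_trans (Finset.card_le_card (X.supp_add_subset c d)) (Finset.card_union_le _ _)

lemma chainCard_sum_le (X : SCplx V) {ι : Type*} (s : Finset ι)
    (f : ι → (Finset V → ZMod 2)) :
    X.chainCard (∑ i ∈ s, f i) ≤ ∑ i ∈ s, X.chainCard (f i) := by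
  classical
  induction s using Finset.cons_induction with
  | empty => simp [chainCard, supp]
  | cons a s ha ih =>
      rw [Finset.sum_cons, Finset.sum_cons]
      exact le_trans (X.chainCard_add_le _ _) (by omega)

lemma chainCard_sChain (X : SCplx V) {τ : Finset V} (hτ : τ ∈ X.faces) :
    X.chainCard (sChain τ) = 1 := by
  have : X.supp (sChain τ) = {τ} := by
    ext σ
    simp only [supp, Finset.mem_filter, Finset.mem_singleton, sChain_apply]
    constructor
    · intro hmem; have h := (Finset.mem_filter.1 hmem).2
      by_contra hne; simp [hne] at h
    · rintro rfl; simp [hτ]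
  simp [chainCard, this]

/-- graded chains are determined by their values on faces. -/
lemma eq_sum_sChain {X : SCplx V} {m : ℕ} {c : Finset V → ZMod 2}
    (hc : X.IsGraded m c) : c = ∑ τ ∈ X.faces, c τ • sChain τ := by
  funext σ
  rw [Finset.sum_apply]
  simp only [Pi.smul_apply, sChain_apply, smul_eq_mul, mul_ite, mul_one, mul_zero]
  rw [Finset.sum_ite_eq X.faces σ c]
  by_cases h : σ ∈ X.faces
  · simp [h]
  · rw [if_neg h]
    by_contra hne
    have := hc σ (fun h => hne (by rw [h]))
    simp [cfaces, Finset.mem_filter] at this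
    exact h this.1

lemma sum_restrict_graded {X : SCplx V} {m : ℕ} {c : Finset V → ZMod 2}
    (hc : X.IsGraded m c) (F : Finset V → (Finset V → ZMod 2)) :
    ∑ τ ∈ X.faces, c τ • F τ = ∑ τ ∈ X.cfaces m, c τ • F τ := by
  refine (Finset.sum_subset (Finset.filter_subset _ _) ?_).symm
  intro τ hτ hτ'
  have : c τ = 0 := by
    by_contra h; exact hτ' (hc τ h)
  simp [this]

end SCplx

namespace SCplx

set_option linter.unusedSectionVars false

variable {V : Type} [DecidableEq V]

lemma mem_subf {X : SCplx V} {τ σ : Finset V} :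
    σ ∈ X.subf τ ↔ σ ∈ X.faces ∧ σ ⊆ τ ∧ σ.card + 1 = τ.card := by
  simp [subf, Finset.mem_filter, and_assoc]

lemma subf_eq_image {X : SCplx V} {τ : Finset V} (hτ : τ ∈ X.faces) :
    X.subf τ = τ.image (fun x => τ.erase x) := by
  ext σ
  rw [mem_subf, Finset.mem_image]
  constructor
  · rintro ⟨hf, hsub, hcard⟩
    have hd : (τ \ σ).card = 1 := by
      rw [Finset.card_sdiff_of_subset hsub]; omega
    obtain ⟨x, hx⟩ := Finset.card_eq_one.1 hd
    have hxτ : x ∈ τ := by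
      have : x ∈ τ \ σ := by rw [hx]; exact Finset.mem_singleton_self x
      exact (Finset.mem_sdiff.1 this).1
    refine ⟨x, hxτ, ?_⟩
    have : τ.erase x = τ \ {x} := by
      ext y; simp [Finset.mem_erase, Finset.mem_sdiff, and_comm]
    rw [this, ← hx, Finset.sdiff_sdiff_self_left]
    exact Finset.inter_eq_right.2 hsub
  · rintro ⟨x, hx, rfl⟩
    refine ⟨X.down_closed τ hτ _ (Finset.erase_subset x τ), Finset.erase_subset x τ, ?_⟩
    rw [Finset.card_erase_of_mem hx]
    have : 1 ≤ τ.card := Finset.card_pos.2 ⟨x, hx⟩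
    omega

lemma subf_card {X : SCplx V} {τ : Finset V} (hτ : τ ∈ X.faces) :
    (X.subf τ).card = τ.card := by
  rw [subf_eq_image hτ]
  rw [Finset.card_image_of_injOn]
  intro x hx y hy hxy
  rw [Finset.mem_coe] at hx hy
  dsimp only at hxy
  by_contra hne
  have hmem : x ∈ τ.erase y := Finset.mem_erase.2 ⟨hne, hx⟩
  rw [← hxy] at hmem
  exact (Finset.mem_erase.1 hmem).1 rfl

lemma two_nsmul_chain (c : Finset V → ZMod 2) : (2 : ℕ) • c = 0 := by
  rw [two_nsmul]; exact chain_add_self c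

/-- the crucial "∂∂ = 0"-style double counting. -/
lemma double_sum_zero (X : SCplx V) {τ : Finset V} (hτ : τ ∈ X.faces)
    (h : Finset V → (Finset V → ZMod 2)) :
    ∑ σ ∈ X.subf τ, ∑ ρ ∈ X.subf σ, h ρ = 0 := by
  classical
  have step1 : ∀ σ, ∑ ρ ∈ X.subf σ, h ρ
      = ∑ ρ ∈ X.faces, if ρ ⊆ σ ∧ ρ.card + 1 = σ.card then h ρ else 0 := by
    intro σ; rw [subf, Finset.sum_filter]
  calc ∑ σ ∈ X.subf τ, ∑ ρ ∈ X.subf σ, h ρ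
      = ∑ σ ∈ X.subf τ, ∑ ρ ∈ X.faces,
          if ρ ⊆ σ ∧ ρ.card + 1 = σ.card then h ρ else 0 := by
        exact Finset.sum_congr rfl fun σ _ => step1 σ
    _ = ∑ ρ ∈ X.faces, ∑ σ ∈ X.subf τ,
          if ρ ⊆ σ ∧ ρ.card + 1 = σ.card then h ρ else 0 := Finset.sum_comm
    _ = ∑ ρ ∈ X.faces,
          ((X.subf τ).filter fun σ => ρ ⊆ σ ∧ ρ.card + 1 = σ.card).card • h ρ := by
        refine Finset.sum_congr rfl fun ρ _ => ?_
        rw [← Finset.sum_filter, Finset.sum_const]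
    _ = 0 := by
        refine Finset.sum_eq_zero fun ρ hρ => ?_
        set s := (X.subf τ).filter fun σ => ρ ⊆ σ ∧ ρ.card + 1 = σ.card with hs
        have heven : Even s.card := by
          by_cases hcond : ρ ⊆ τ ∧ ρ.card + 2 = τ.card
          · have : s = (τ \ ρ).image (fun x => insert x ρ) := by
              ext σ
              simp only [hs, Finset.mem_filter, mem_subf, Finset.mem_image]
              constructor
              · rintro ⟨⟨hf, hsub, hc1⟩, hρσ, hc2⟩
                have hd : (σ \ ρ).card = 1 := by
                  rw [Finset.card_sdiff_of_subset hρσ]; omega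
                obtain ⟨x, hx⟩ := Finset.card_eq_one.1 hd
                have hxσ : x ∈ σ \ ρ := by rw [hx]; exact Finset.mem_singleton_self x
                rw [Finset.mem_sdiff] at hxσ
                refine ⟨x, Finset.mem_sdiff.2 ⟨hsub hxσ.1, hxσ.2⟩, ?_⟩
                apply Finset.Subset.antisymm
                · intro y hy
                  rcases Finset.mem_insert.1 hy with rfl | hy
                  · exact hxσ.1
                  · exact hρσ hy
                · intro y hy
                  by_cases hyρ : y ∈ ρ
                  · exact Finset.mem_insert_of_mem hyρ
                  · have : y ∈ σ \ ρ := Finset.mem_sdiff.2 ⟨hy, hyρ⟩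
                    rw [hx, Finset.mem_singleton] at this
                    rw [this]; exact Finset.mem_insert_self x ρ
              · rintro ⟨x, hx, rfl⟩
                rw [Finset.mem_sdiff] at hx
                have hsub : insert x ρ ⊆ τ :=
                  Finset.insert_subset hx.1 hcond.1
                have hcard : (insert x ρ).card = ρ.card + 1 :=
                  Finset.card_insert_of_notMem hx.2
                exact ⟨⟨X.down_closed τ hτ _ hsub, hsub, by omega⟩,
                  Finset.subset_insert x ρ, hcard.symm⟩
            rw [this, Finset.card_image_of_injOn, Finset.card_sdiff_of_subset hcond.1]
            · have : τ.card - ρ.card = 2 := by omega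
              rw [this]; exact even_two
            · intro x hx y hy hxy
              rw [Finset.mem_coe, Finset.mem_sdiff] at hx
              dsimp only at hxy
              have : x ∈ insert y ρ := by rw [← hxy]; exact Finset.mem_insert_self x ρ
              rcases Finset.mem_insert.1 this with rfl | hc
              · rfl
              · exact absurd hc hx.2
          · have : s = ∅ := by
              rw [Finset.eq_empty_iff_forall_notMem]
              intro σ hσ
              simp only [hs, Finset.mem_filter, mem_subf] at hσ
              exact hcond ⟨hσ.2.1.trans hσ.1.2.1, by omega⟩
            rw [this]; simp
        obtain ⟨t, ht⟩ := heven
        rw [ht, ← two_mul, mul_comm, mul_smul, two_nsmul_chain, smul_zero]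

lemma exists_chain_min {ι : Type*} [Nonempty ι] (f : ι → ℕ) :
    ∃ i, ∀ j, f i ≤ f j := by
  obtain ⟨i0⟩ := ‹Nonempty ι›
  obtain ⟨n, ⟨j, hj⟩, hmin⟩ :=
    Nat.lt_wfRel.wf.has_min (Set.range f) ⟨f i0, i0, rfl⟩
  exact ⟨j, fun j' => by
    rw [hj]
    exact not_lt.1 fun h => hmin _ ⟨j', rfl⟩ h⟩

end SCplx

namespace SCplx

set_option linter.unusedSectionVars false

variable {V : Type} [DecidableEq V]

open Classical in
/-- recursive construction of the cone of a single face, by cardinality. -/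
noncomputable def coneG (X : SCplx V) (v : V) : ℕ → Finset V → (Finset V → ZMod 2)
  | 0 => fun _ => sChain {v}
  | (m + 1) => fun τ =>
      if h : ∃ a, X.IsGraded (m + 1 + 1) a ∧
          (X.bdry a = sChain τ + ∑ σ ∈ X.subf τ, coneG X v m σ) ∧
          (X.chainCard a : ℕ∞) ≤ X.Mconst (m + 1)
      then h.choose else 0

/-- the cone of a single face. -/
noncomputable def coneg (X : SCplx V) (v : V) (τ : Finset V) : Finset V → ZMod 2 :=
  coneG X v τ.card τ

lemma coneg_empty (X : SCplx V) (v : V) : X.coneg v ∅ = sChain {v} := by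
  simp [coneg, coneG]

lemma sum_coneG_eq {X : SCplx V} {v : V} {τ : Finset V} {m : ℕ} (hτ : τ.card = m + 1) :
    ∑ σ ∈ X.subf τ, coneG X v m σ = ∑ σ ∈ X.subf τ, X.coneg v σ := by
  refine Finset.sum_congr rfl fun σ hσ => ?_
  have := (mem_subf.1 hσ).2.2
  have hcard : σ.card = m := by omega
  rw [coneg, hcard]

/-- the boundary that the cone of `τ` must fill. -/
noncomputable def Bof (X : SCplx V) (v : V) (τ : Finset V) : Finset V → ZMod 2 :=
  sChain τ + ∑ σ ∈ X.subf τ, X.coneg v σ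

lemma coneg_succ {X : SCplx V} {v : V} {τ : Finset V} {m : ℕ} (hτ : τ.card = m + 1)
    (h : ∃ a, X.IsGraded (m + 1 + 1) a ∧ X.bdry a = X.Bof v τ ∧
      (X.chainCard a : ℕ∞) ≤ X.Mconst (m + 1)) :
    X.IsGraded (m + 1 + 1) (X.coneg v τ) ∧ X.bdry (X.coneg v τ) = X.Bof v τ ∧
      (X.chainCard (X.coneg v τ) : ℕ∞) ≤ X.Mconst (m + 1) := by
  have hB : sChain τ + ∑ σ ∈ X.subf τ, coneG X v m σ = X.Bof v τ := by
    rw [Bof, sum_coneG_eq hτ]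
  have hthis : X.coneg v τ = coneG X v (m + 1) τ := by rw [coneg, hτ]
  have h' : ∃ a, X.IsGraded (m + 1 + 1) a ∧
      (X.bdry a = sChain τ + ∑ σ ∈ X.subf τ, coneG X v m σ) ∧
      (X.chainCard a : ℕ∞) ≤ X.Mconst (m + 1) := by rw [hB]; exact h
  have hdef : coneG X v (m + 1) τ = h'.choose := by
    rw [coneG]
    exact dif_pos h'
  rw [hthis, hdef, ← hB]
  exact h'.choose_spec

/-- The key inductive construction lemma. -/
lemma key_lemma {X : SCplx V} (k : ℕ)
    (hSys : ∀ j ≤ k, ((j : ℕ∞) + 1) * X.Mconst j + 1 < X.Sys j)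
    {v : V} (hv : {v} ∈ X.faces) :
    ∀ m, m ≤ k + 1 → ∀ τ ∈ X.faces, τ.card = m →
      X.IsGraded (m + 1) (X.coneg v τ) ∧
      X.bdry (X.coneg v τ) = X.Bof v τ ∧
      (X.chainCard (X.coneg v τ) : ℕ∞) ≤ X.Mconst m := by
  intro m
  induction m with
  | zero =>
      intro _ τ hτ hcard
      obtain rfl : τ = ∅ := Finset.card_eq_zero.1 hcard
      rw [coneg_empty]
      have hsubf : X.subf ∅ = ∅ := by
        rw [Finset.eq_empty_iff_forall_notMem]
        intro σ hσ
        have := (mem_subf.1 hσ).2.2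
        simp at this
      have hsubv : X.subf {v} = {∅} := by
        ext σ
        rw [mem_subf, Finset.mem_singleton]
        constructor
        · rintro ⟨-, hsub, hc⟩
          simpa using Finset.card_eq_zero.1 (by simpa using hc)
        · rintro rfl
          exact ⟨X.empty_mem, Finset.empty_subset _, by simp⟩
      refine ⟨?_, ?_, ?_⟩
      · have := isGraded_sChain (X := X) hv
        simpa using this
      · rw [X.bdry_sChain hv, hsubv, Bof, hsubf]
        simp
      · rw [X.chainCard_sChain hv, Mconst]
        exact le_refl 1
  | succ m ih =>
      intro hm τ hτ hcard
      -- facts about subfaces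
      have hsub_facts : ∀ σ ∈ X.subf τ, σ ∈ X.faces ∧ σ.card = m := by
        intro σ hσ
        obtain ⟨h1, h2, h3⟩ := mem_subf.1 hσ
        exact ⟨h1, by omega⟩
      have ihσ : ∀ σ ∈ X.subf τ,
          X.IsGraded (m + 1) (X.coneg v σ) ∧
          X.bdry (X.coneg v σ) = X.Bof v σ ∧
          (X.chainCard (X.coneg v σ) : ℕ∞) ≤ X.Mconst m := fun σ hσ =>
        ih (by omega) σ (hsub_facts σ hσ).1 (hsub_facts σ hσ).2
      -- the cycle B
      set B := X.Bof v τ with hBdef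
      have hBgraded : X.IsGraded (m + 1) B := by
        rw [hBdef, Bof]
        refine isGraded_add ?_ (isGraded_sum fun σ hσ => (ihσ σ hσ).1)
        have := isGraded_sChain (X := X) hτ
        rwa [hcard] at this
      have hBbdry : X.bdry B = 0 := by
        rw [hBdef, Bof, X.bdry_add, X.bdry_sum, X.bdry_sChain hτ]
        have : ∀ σ ∈ X.subf τ, X.bdry (X.coneg v σ) =
            sChain σ + ∑ ρ ∈ X.subf σ, X.coneg v ρ := fun σ hσ => (ihσ σ hσ).2.1
        rw [Finset.sum_congr rfl this, Finset.sum_add_distrib]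
        rw [← add_assoc, chain_add_self, zero_add]
        exact X.double_sum_zero hτ _
      have hBcard : (X.chainCard B : ℕ∞) ≤ ((m : ℕ∞) + 1) * X.Mconst m + 1 := by
        have h1 : X.chainCard B ≤ 1 + ∑ σ ∈ X.subf τ, X.chainCard (X.coneg v σ) := by
          rw [hBdef, Bof]
          refine le_trans (X.chainCard_add_le _ _) ?_
          rw [X.chainCard_sChain hτ]
          exact add_le_add (le_refl 1) (X.chainCard_sum_le _ _)
        calc (X.chainCard B : ℕ∞)
            ≤ 1 + ∑ σ ∈ X.subf τ, (X.chainCard (X.coneg v σ) : ℕ∞) := by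
              refine le_trans (Nat.cast_le.2 h1) ?_
              push_cast
              exact le_refl _
          _ ≤ 1 + ∑ σ ∈ X.subf τ, X.Mconst m := by
              exact add_le_add (le_refl 1) (Finset.sum_le_sum fun σ hσ => (ihσ σ hσ).2.2)
          _ = ((m : ℕ∞) + 1) * X.Mconst m + 1 := by
              rw [Finset.sum_const, subf_card hτ, hcard]
              rw [nsmul_eq_mul, add_comm]
              push_cast
              ring_nf
      -- B is a cycle, small, hence a boundary
      have hcyc : X.IsCycle m B := ⟨hBgraded, hBbdry⟩
      have hbd : X.IsBdryChain m B := by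
        by_contra hnb
        have h1 : X.Sys m ≤ (X.chainCard B : ℕ∞) :=
          iInf_le (fun c : {c : Finset V → ZMod 2 // X.IsCycle m c ∧ ¬X.IsBdryChain m c} =>
            (X.chainCard c.1 : ℕ∞)) ⟨B, hcyc, hnb⟩
        have h2 := hSys m (by omega)
        exact absurd (h1.trans hBcard) (not_le.2 h2)
      -- extract a minimal filling
      obtain ⟨a0, ha0g, ha0b⟩ := hbd
      have hne : Nonempty {a : Finset V → ZMod 2 // X.IsGraded (m + 2) a ∧ X.bdry a = B} :=
        ⟨⟨a0, ha0g, ha0b⟩⟩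
      obtain ⟨amin, hamin⟩ := exists_chain_min
        (fun a : {a : Finset V → ZMod 2 // X.IsGraded (m + 2) a ∧ X.bdry a = B} =>
          X.chainCard a.1)
      have hfill : (X.chainCard amin.1 : ℕ∞) ≤ X.FillB m B :=
        le_iInf fun b => Nat.cast_le.2 (hamin b)
      have hFleq : X.FillB m B ≤ X.Mconst (m + 1) := by
        rw [Mconst]
        exact le_iSup (fun B' : {B' : Finset V → ZMod 2 // X.IsCycle m B' ∧
          (X.chainCard B' : ℕ∞) ≤ ((m : ℕ∞) + 1) * X.Mconst m + 1} => X.FillB m B'.1)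
          ⟨B, hcyc, hBcard⟩
      have hex : ∃ a, X.IsGraded (m + 1 + 1) a ∧ X.bdry a = X.Bof v τ ∧
          (X.chainCard a : ℕ∞) ≤ X.Mconst (m + 1) :=
        ⟨amin.1, amin.2.1, amin.2.2, hfill.trans hFleq⟩
      exact coneg_succ hcard hex

end SCplx

open SCplx in
/-- With `M_{-1} = 1` and `M_k = Fill_k((k+1)·M_{k-1}+1)`
(here `Mconst X (k+1) = M_k`): if `Sys_j(X) > (j+1)·M_{j-1}+1` for every `0 ≤ j ≤ k`,
then `Crad_k(X) ≤ M_k`. -/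
theorem stmt5 {V : Type} [DecidableEq V] (n : ℕ) (X : SCplx V) (hpure : X.Pure n)
    (k : ℕ) (hk : k < n)
    (hSys : ∀ j ≤ k, ((j : ℕ∞) + 1) * X.Mconst j + 1 < X.Sys j) :
    X.Crad (k + 1) ≤ X.Mconst (k + 1) := by
  classical
  -- find a vertex
  obtain ⟨τ0, hτ0, -⟩ := hpure ∅ X.empty_mem
  rw [cfaces, Finset.mem_filter] at hτ0
  have hτ0ne : τ0.Nonempty := Finset.card_pos.1 (by omega)
  obtain ⟨v, hvτ⟩ := hτ0ne
  have hv : {v} ∈ X.faces :=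
    X.down_closed τ0 hτ0.1 {v} (Finset.singleton_subset_iff.2 hvτ)
  have key := key_lemma k hSys hv
  -- build the cone function
  let C : ConeFun X (k + 1) v :=
    { toFun := fun c => ∑ τ ∈ X.faces, c τ • X.coneg v τ
      map_add := fun c₁ c₂ => by
        simp only [Pi.add_apply, add_smul, Finset.sum_add_distrib]
      graded := by
        intro m hm c hc σ hσ
        have hex : ∃ τ ∈ X.faces, (c τ • X.coneg v τ) σ ≠ 0 := by
          by_contra hall
          push_neg at hall
          apply hσ
          show (∑ τ ∈ X.faces, c τ • X.coneg v τ) σ = 0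
          rw [Finset.sum_apply]
          exact Finset.sum_eq_zero fun τ ht => hall τ ht
        obtain ⟨τ, hτf, hne⟩ := hex
        have hcτ : c τ ≠ 0 := fun h0 => hne (by simp [h0])
        have hτm := hc τ hcτ
        rw [cfaces, Finset.mem_filter] at hτm
        exact (key m hm τ hτm.1 hτm.2).1 σ fun h0 => hne (by simp [Pi.smul_apply, h0])
      apex := by
        show ∑ τ ∈ X.faces, sChain ∅ τ • X.coneg v τ = sChain {v}
        simp only [sChain_apply, ite_smul, one_smul, zero_smul]
        rw [Finset.sum_ite_eq' X.faces ∅ (X.coneg v)]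
        simp [X.empty_mem, coneg_empty]
      cone_eq := by
        intro m hm1 hmK c hc
        show X.bdry (∑ τ ∈ X.faces, c τ • X.coneg v τ)
          = c + ∑ σ ∈ X.faces, (X.bdry c) σ • X.coneg v σ
        have hLHS : X.bdry (∑ τ ∈ X.faces, c τ • X.coneg v τ)
            = c + ∑ τ ∈ X.cfaces m, c τ • (∑ σ ∈ X.subf τ, X.coneg v σ) := by
          rw [X.bdry_sum]
          rw [Finset.sum_congr rfl fun τ (_ : τ ∈ X.faces) => X.bdry_smul (c τ) (X.coneg v τ)]
          rw [sum_restrict_graded hc (fun τ => X.bdry (X.coneg v τ))]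
          have hkey : ∀ τ ∈ X.cfaces m,
              c τ • X.bdry (X.coneg v τ)
                = c τ • sChain τ + c τ • ∑ σ ∈ X.subf τ, X.coneg v σ := by
            intro τ hτ
            rw [cfaces, Finset.mem_filter] at hτ
            rw [(key m hmK τ hτ.1 hτ.2).2.1, Bof, smul_add]
          rw [Finset.sum_congr rfl hkey, Finset.sum_add_distrib]
          congr 1
          rw [← sum_restrict_graded hc (fun τ => sChain τ), ← eq_sum_sChain hc]
        have hRHS : (∑ σ ∈ X.faces, (X.bdry c) σ • X.coneg v σ)
            = ∑ τ ∈ X.cfaces m, c τ • (∑ σ ∈ X.subf τ, X.coneg v σ) := by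
          rw [← sum_restrict_graded hc (fun τ => ∑ σ ∈ X.subf τ, X.coneg v σ)]
          calc ∑ σ ∈ X.faces, (X.bdry c) σ • X.coneg v σ
              = ∑ σ ∈ X.faces, ∑ τ ∈ X.faces,
                  (if σ ⊆ τ ∧ τ.card = σ.card + 1 then c τ • X.coneg v σ else 0) := by
                refine Finset.sum_congr rfl fun σ _ => ?_
                rw [bdry, Finset.sum_smul, Finset.sum_filter]
            _ = ∑ τ ∈ X.faces, ∑ σ ∈ X.faces,
                  (if σ ⊆ τ ∧ τ.card = σ.card + 1 then c τ • X.coneg v σ else 0) :=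
                Finset.sum_comm
            _ = ∑ τ ∈ X.faces, c τ • ∑ σ ∈ X.subf τ, X.coneg v σ := by
                refine Finset.sum_congr rfl fun τ _ => ?_
                rw [Finset.smul_sum, subf, Finset.sum_filter]
                refine Finset.sum_congr rfl fun σ _ => ?_
                refine if_congr (and_congr_right fun _ => eq_comm) rfl rfl
        rw [hLHS, hRHS] }
  -- bound the volume
  have hVol : (C.Vol : ℕ∞) ≤ X.Mconst (k + 1) := by
    have hτbound : ∀ τ ∈ X.cfaces (k + 1),
        (X.chainCard (C.toFun (sChain τ)) : ℕ∞) ≤ X.Mconst (k + 1) := by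
      intro τ hτ
      rw [cfaces, Finset.mem_filter] at hτ
      have htf : C.toFun (sChain τ) = X.coneg v τ := by
        show ∑ σ ∈ X.faces, sChain τ σ • X.coneg v σ = _
        simp only [sChain_apply, ite_smul, one_smul, zero_smul]
        rw [Finset.sum_ite_eq' X.faces τ (X.coneg v)]
        simp [hτ.1]
      rw [htf]
      exact (key (k + 1) le_rfl τ hτ.1 hτ.2).2.2
    rcases eq_or_ne (X.Mconst (k + 1)) ⊤ with hM | hM
    · rw [hM]; exact le_top
    · set M := (X.Mconst (k + 1)).toNat with hMdef
      have hMM : (M : ℕ∞) = X.Mconst (k + 1) := ENat.coe_toNat hM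
      have hsup : C.Vol ≤ M := by
        rw [ConeFun.Vol]
        refine Finset.sup_le fun τ hτ => ?_
        have h := hτbound τ hτ
        rw [← hMM] at h
        exact Nat.cast_le.1 h
      calc (C.Vol : ℕ∞) ≤ (M : ℕ∞) := Nat.cast_le.2 hsup
        _ = _ := hMM
  exact le_trans (iInf₂_le v C) hVol
end

section
/- Let n ≥ 2 and let q be a prime power. Let Unip_{n+1}(F_q) be the group of (n+1)×(n+1) upper unitriangular matrices over F_q (equivalently, the group generated by the elementary matrices e_{i,j}(a) for 1 ≤ i < j ≤ n+1, a ∈ F_q). For 0 ≤ i ≤ n−1 let K_i be the subgroup generated by { e_{j,j+1}(a) : j ∈ {1,...,n}∖{i+1}, a ∈ F_q }. Then every g ∈ Unip_{n+1}(F_q) can be written as a product of at most 6 elements of K_0 ∪ K_{n-1}. -/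
open Matrix

namespace Stmt12Aux

variable {n : ℕ} {F : Type} [Field F]

/-- Upper unitriangular predicate. -/
def IsUT (M : Matrix (Fin (n+1)) (Fin (n+1)) F) : Prop :=
  (∀ i, M i i = 1) ∧ ∀ i j : Fin (n+1), (j : ℕ) < (i : ℕ) → M i j = 0

lemma isUT_one : IsUT (1 : Matrix (Fin (n+1)) (Fin (n+1)) F) := by
  constructor
  · intro i; simp
  · intro i j h
    exact Matrix.one_apply_ne (fun he => by omega)

lemma IsUT.mul {A B : Matrix (Fin (n+1)) (Fin (n+1)) F} (hA : IsUT A) (hB : IsUT B) :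
    IsUT (A * B) := by
  constructor
  · intro i
    rw [Matrix.mul_apply]
    rw [Finset.sum_eq_single i]
    · rw [hA.1, hB.1, one_mul]
    · intro k _ hk
      have : (k:ℕ) ≠ (i:ℕ) := fun hh => hk (Fin.ext hh)
      rcases lt_or_gt_of_ne this with h | h
      · rw [hA.2 i k h, zero_mul]
      · rw [hB.2 k i h, mul_zero]
    · intro h; exact absurd (Finset.mem_univ i) h
  · intro i j hij
    rw [Matrix.mul_apply]
    apply Finset.sum_eq_zero
    intro k _
    by_cases h : (k:ℕ) < (i:ℕ)
    · rw [hA.2 i k h, zero_mul]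
    · rw [hB.2 k j (by omega), mul_zero]

lemma isUT_elem {i j : Fin (n+1)} (h : (i:ℕ) < (j:ℕ)) (a : F) :
    IsUT (1 + Matrix.single i j a) := by
  constructor
  · intro r
    rw [Matrix.add_apply, Matrix.one_apply_eq,
      Matrix.single_apply_of_ne (i := i) (j := j) (c := a) (i' := r) (j' := r) (by rintro ⟨rfl, rfl⟩; omega), add_zero]
  · intro r c hrc
    rw [Matrix.add_apply, Matrix.one_apply_ne (fun he => by subst he; omega),
      Matrix.single_apply_of_ne (i := i) (j := j) (c := a) (i' := r) (j' := c) (by rintro ⟨rfl, rfl⟩; omega), add_zero]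

lemma stdBasisMatrix_neg (i j : Fin (n+1)) (a : F) :
    Matrix.single i j (-a) = - Matrix.single i j a := by
  rw [← neg_one_smul F (Matrix.single i j a), Matrix.smul_single]
  norm_num

lemma elem_mul_elem {i j : Fin (n+1)} (h : i ≠ j) (a b : F) :
    (1 + Matrix.single i j a) * (1 + Matrix.single i j b)
      = 1 + Matrix.single i j (a + b) := by
  rw [Matrix.single_add, mul_add, mul_one, add_mul, one_mul,
    Matrix.single_mul_single_of_ne a i j _ h.symm b]
  abel

lemma elem_comm {i k j : Fin (n+1)} (hik : i ≠ k) (hkj : k ≠ j) (hij : i ≠ j) (a b : F) :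
    (1 + Matrix.single i k a) * (1 + Matrix.single k j b) *
      (1 + Matrix.single i k (-a)) * (1 + Matrix.single k j (-b))
      = 1 + Matrix.single i j (a * b) := by
  rw [stdBasisMatrix_neg, stdBasisMatrix_neg]
  set A := Matrix.single i k a with hA
  set B := Matrix.single k j b with hB
  have hAB : A * B = Matrix.single i j (a * b) :=
    Matrix.single_mul_single_same a i k j b
  have hBA : B * A = 0 := Matrix.single_mul_single_of_ne b k j _ hij.symm a
  have hAA : A * A = 0 := Matrix.single_mul_single_of_ne a i k _ hik.symm a
  have hBB : B * B = 0 := Matrix.single_mul_single_of_ne b k j _ hkj.symm b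
  have h1 : (1 + A) * (1 + B) = 1 + A + B + A * B := by noncomm_ring
  have h2 : (1 + -A) * (1 + -B) = 1 - A - B + A * B := by noncomm_ring
  rw [mul_assoc ((1 + A) * (1 + B)), h1, h2, hAB]
  set C := Matrix.single i j (a * b) with hC
  have hAC : A * C = 0 := Matrix.single_mul_single_of_ne a i k _ hik.symm (a * b)
  have hCA : C * A = 0 := Matrix.single_mul_single_of_ne (a * b) i j _ hij.symm a
  have hBC : B * C = 0 := Matrix.single_mul_single_of_ne b k j _ hij.symm (a * b)
  have hCB : C * B = 0 := Matrix.single_mul_single_of_ne (a * b) i j _ hkj.symm b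
  have hCC : C * C = 0 := Matrix.single_mul_single_of_ne (a * b) i j _ hij.symm (a * b)
  have expand : (1 + A + B + C) * (1 - A - B + C) =
      1 + C - A*A - A*B + A*C - B*A - B*B + B*C - C*A - C*B + C*C + (A - A) + (B - B) + C := by
    noncomm_ring
  rw [expand, hAA, hAB, hAC, hBA, hBB, hBC, hCA, hCB, hCC]
  abel


/-- The elementary matrix as a unit. -/
def elemU (i j : Fin (n+1)) (h : i ≠ j) (a : F) :
    (Matrix (Fin (n+1)) (Fin (n+1)) F)ˣ where
  val := 1 + Matrix.single i j a
  inv := 1 + Matrix.single i j (-a)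
  val_inv := by rw [elem_mul_elem h, add_neg_cancel, Matrix.single_zero, add_zero]
  inv_val := by rw [elem_mul_elem h, neg_add_cancel, Matrix.single_zero, add_zero]

@[simp] lemma elemU_val (i j : Fin (n+1)) (h : i ≠ j) (a : F) :
    (elemU i j h a : Matrix (Fin (n+1)) (Fin (n+1)) F) = 1 + Matrix.single i j a := rfl

/-- closure of allowed superdiagonal elementary matrices -/
def Lgrp (s : Set (Fin n)) : Subgroup (Matrix (Fin (n+1)) (Fin (n+1)) F)ˣ :=
  Subgroup.closure {M | ∃ (j : Fin n) (a : F), j ∈ s ∧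
    (M : Matrix (Fin (n+1)) (Fin (n+1)) F) =
      1 + Matrix.single j.castSucc j.succ a}

lemma elemU_gen_mem (s : Set (Fin n)) (i j : Fin (n+1)) (h : i ≠ j)
    (hj : (j:ℕ) = (i:ℕ) + 1) (hs : ∀ k : Fin n, (i:ℕ) ≤ (k:ℕ) → (k:ℕ) < (j:ℕ) → k ∈ s)
    (a : F) : elemU i j h a ∈ Lgrp s := by
  have hi : (i:ℕ) < n := by have := j.isLt; omega
  refine Subgroup.subset_closure ⟨⟨(i:ℕ), hi⟩, a, hs _ le_rfl (by simp [hj]), ?_⟩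
  have e1 : (⟨(i:ℕ), hi⟩ : Fin n).castSucc = i := by ext; simp
  have e2 : (⟨(i:ℕ), hi⟩ : Fin n).succ = j := by ext; simp [hj]
  rw [elemU_val, e1, e2]

lemma elemU_mem_aux (s : Set (Fin n)) (d : ℕ) :
    ∀ (i j : Fin (n+1)) (h : i ≠ j), (j:ℕ) = (i:ℕ) + 1 + d →
    (∀ k : Fin n, (i:ℕ) ≤ (k:ℕ) → (k:ℕ) < (j:ℕ) → k ∈ s) →
    ∀ a : F, elemU i j h a ∈ Lgrp s := by
  induction d with
  | zero =>
    intro i j h hj hs a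
    exact elemU_gen_mem s i j h (by omega) hs a
  | succ d ih =>
    intro i j h hj hs a
    have hjlt := j.isLt
    set k : Fin (n+1) := ⟨(i:ℕ) + 1 + d, by omega⟩ with hk
    have hik : i ≠ k := Fin.ne_of_val_ne (show (i:ℕ) ≠ (i:ℕ) + 1 + d by omega)
    have hkj : k ≠ j := Fin.ne_of_val_ne (show (i:ℕ) + 1 + d ≠ (j:ℕ) by omega)
    have key : elemU i j h a
        = elemU i k hik a * elemU k j hkj 1 * elemU i k hik (-a) * elemU k j hkj (-1) := by
      apply Units.ext
      push_cast [Units.val_mul, elemU_val]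
      rw [elem_comm hik hkj h a 1, mul_one]
    rw [key]
    have hstep1 : ∀ k' : Fin n, (i:ℕ) ≤ (k':ℕ) → (k':ℕ) < (k:ℕ) → k' ∈ s := by
      intro k' h1 h2
      have h2' : (k':ℕ) < (i:ℕ) + 1 + d := h2
      exact hs k' h1 (by omega)
    have m1 : elemU i k hik a ∈ Lgrp s := ih i k hik rfl hstep1 a
    have m2 : ∀ b : F, elemU k j hkj b ∈ Lgrp s := by
      intro b
      apply elemU_gen_mem s k j hkj (show (j:ℕ) = (i:ℕ) + 1 + d + 1 by omega) ?_ b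
      intro k' h1 h2
      have h1' : (i:ℕ) + 1 + d ≤ (k':ℕ) := h1
      exact hs k' (by omega) h2
    have m3 : elemU i k hik (-a) ∈ Lgrp s := ih i k hik rfl hstep1 (-a)
    exact mul_mem (mul_mem (mul_mem m1 (m2 1)) m3) (m2 (-1))

lemma elemU_mem (s : Set (Fin n)) (i j : Fin (n+1)) (h : i ≠ j) (hlt : (i:ℕ) < (j:ℕ))
    (hs : ∀ k : Fin n, (i:ℕ) ≤ (k:ℕ) → (k:ℕ) < (j:ℕ) → k ∈ s) (a : F) :
    elemU i j h a ∈ Lgrp s :=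
  elemU_mem_aux s ((j:ℕ) - (i:ℕ) - 1) i j h (by omega) hs a

/-- The subgroup of unitriangular units. -/
def UTgrp : Subgroup (Matrix (Fin (n+1)) (Fin (n+1)) F)ˣ where
  carrier := {u | IsUT (u : Matrix (Fin (n+1)) (Fin (n+1)) F) ∧
    IsUT ((u⁻¹ : (Matrix (Fin (n+1)) (Fin (n+1)) F)ˣ) : Matrix (Fin (n+1)) (Fin (n+1)) F)}
  one_mem' := by
    constructor
    · exact isUT_one
    · rw [inv_one]; exact isUT_one
  mul_mem' := by
    rintro a b ⟨ha1, ha2⟩ ⟨hb1, hb2⟩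
    constructor
    · rw [Units.val_mul]; exact ha1.mul hb1
    · rw [_root_.mul_inv_rev, Units.val_mul]; exact hb2.mul ha2
  inv_mem' := by
    rintro a ⟨h1, h2⟩
    exact ⟨h2, by rw [inv_inv]; exact h1⟩

lemma mem_UTgrp_iff (u : (Matrix (Fin (n+1)) (Fin (n+1)) F)ˣ) :
    u ∈ (UTgrp : Subgroup (Matrix (Fin (n+1)) (Fin (n+1)) F)ˣ) ↔
      IsUT (u : Matrix (Fin (n+1)) (Fin (n+1)) F) ∧
      IsUT ((u⁻¹ : (Matrix (Fin (n+1)) (Fin (n+1)) F)ˣ) : Matrix (Fin (n+1)) (Fin (n+1)) F) :=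
  Iff.rfl


open scoped Classical in
/-- The off-diagonal support of a matrix. -/
noncomputable def suppF (M : Matrix (Fin (n+1)) (Fin (n+1)) F) :
    Finset (Fin (n+1) × Fin (n+1)) :=
  Finset.univ.filter fun p => p.1 ≠ p.2 ∧ M p.1 p.2 ≠ 0

lemma mem_suppF {M : Matrix (Fin (n+1)) (Fin (n+1)) F} {p : Fin (n+1) × Fin (n+1)} :
    p ∈ suppF M ↔ p.1 ≠ p.2 ∧ M p.1 p.2 ≠ 0 := by
  classical
  simp [suppF]

lemma eq_one_of_suppF_empty {M : Matrix (Fin (n+1)) (Fin (n+1)) F}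
    (h : suppF M = ∅) (hut : IsUT M) : M = 1 := by
  ext r c
  by_cases hrc : r = c
  · subst hrc; rw [hut.1, Matrix.one_apply_eq]
  · have : (r, c) ∉ suppF M := by rw [h]; exact Finset.notMem_empty _
    rw [mem_suppF] at this
    push_neg at this
    rw [Matrix.one_apply_ne hrc]
    by_contra hne
    exact hne (this hrc)

lemma exists_unit_mem (s : Set (Fin n)) (N : ℕ) :
    ∀ M : Matrix (Fin (n+1)) (Fin (n+1)) F, (suppF M).card ≤ N → IsUT M →
    (∀ i j : Fin (n+1), i ≠ j → M i j ≠ 0 →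
      ∀ k : Fin n, (i:ℕ) ≤ (k:ℕ) → (k:ℕ) < (j:ℕ) → k ∈ s) →
    ∃ u : (Matrix (Fin (n+1)) (Fin (n+1)) F)ˣ,
      (u : Matrix (Fin (n+1)) (Fin (n+1)) F) = M ∧ u ∈ Lgrp s := by
  induction N with
  | zero =>
    intro M hcard hut _
    have h0 : suppF M = ∅ := Finset.card_eq_zero.mp (Nat.le_zero.mp hcard)
    exact ⟨1, by rw [eq_one_of_suppF_empty h0 hut, Units.val_one], one_mem _⟩
  | succ N ih =>
    intro M hcard hut hsupp
    by_cases h0 : suppF M = ∅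
    · exact ⟨1, by rw [eq_one_of_suppF_empty h0 hut, Units.val_one], one_mem _⟩
    -- pick the minimal dirty column
    have hne : (suppF M).Nonempty := Finset.nonempty_of_ne_empty h0
    set cols : Finset (Fin (n+1)) := (suppF M).image Prod.snd with hcols
    have hcolsne : cols.Nonempty := hne.image _
    set j : Fin (n+1) := cols.min' hcolsne with hjdef
    have hjmem : j ∈ cols := Finset.min'_mem _ _
    obtain ⟨⟨i, j'⟩, hpmem, hpj⟩ := Finset.mem_image.mp hjmem
    simp only at hpj
    subst hpj
    rw [mem_suppF] at hpmem
    obtain ⟨hij, hMij⟩ := hpmem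
    have hvalne : (i:ℕ) ≠ (j:ℕ) := fun hh => hij (Fin.ext hh)
    have hilt : (i:ℕ) < (j:ℕ) := by
      rcases lt_or_gt_of_ne hvalne with h | h
      · exact h
      · exact absurd (hut.2 i j h) hMij
    -- columns before j are standard basis vectors
    have hmin : ∀ c : Fin (n+1), (c:ℕ) < (j:ℕ) → ∀ r : Fin (n+1), r ≠ c → M r c = 0 := by
      intro c hc r hrc
      by_contra hne'
      have : c ∈ cols := Finset.mem_image.mpr ⟨(r, c), mem_suppF.mpr ⟨hrc, hne'⟩, rfl⟩
      have := Finset.min'_le cols c this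
      rw [← hjdef] at this
      rw [Fin.le_def] at this
      omega
    set a : F := M i j with ha
    set M' : Matrix (Fin (n+1)) (Fin (n+1)) F :=
      M * (1 + Matrix.single i j (-a)) with hM'
    have entry : ∀ r c, M' r c = if r = i ∧ c = j then 0 else M r c := by
      intro r c
      have expand : M' r c = M r c + (M * Matrix.single i j (-a)) r c := by
        rw [hM', mul_add, mul_one, Matrix.add_apply]
      by_cases hc : c = j
      · subst hc
        rw [expand, Matrix.mul_single_apply_same]
        by_cases hr : r = i
        · subst hr
          rw [hut.1, if_pos ⟨rfl, rfl⟩]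
          simp [ha]
        · rw [hmin i hilt r hr, if_neg (by tauto)]
          ring
      · rw [expand, Matrix.mul_single_apply_of_ne (-a) i j r c hc,
          if_neg (by tauto), add_zero]
    have hsupp' : suppF M' = (suppF M).erase (i, j) := by
      ext ⟨r, c⟩
      rw [Finset.mem_erase, mem_suppF, mem_suppF, entry r c]
      constructor
      · rintro ⟨h1, h2⟩
        split_ifs at h2 with hcase
        · exact absurd rfl h2
        · exact ⟨by simp [Prod.ext_iff]; tauto, h1, h2⟩
      · rintro ⟨h1, h2, h3⟩
        refine ⟨h2, ?_⟩
        split_ifs with hcase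
        · exact absurd (Prod.ext_iff.mpr ⟨hcase.1, hcase.2⟩) h1
        · exact h3
    have hcard' : (suppF M').card ≤ N := by
      rw [hsupp', Finset.card_erase_of_mem (mem_suppF.mpr ⟨hij, hMij⟩)]
      omega
    have hut' : IsUT M' := by
      constructor
      · intro r
        rw [entry, if_neg (by rintro ⟨rfl, rfl⟩; exact hij rfl)]
        exact hut.1 r
      · intro r c hrc
        rw [entry]
        split_ifs with hcase
        · rfl
        · exact hut.2 r c hrc
    have hsupp'' : ∀ i' j' : Fin (n+1), i' ≠ j' → M' i' j' ≠ 0 →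
        ∀ k : Fin n, (i':ℕ) ≤ (k:ℕ) → (k:ℕ) < (j':ℕ) → k ∈ s := by
      intro i' j' h1 h2 k hk1 hk2
      rw [entry] at h2
      split_ifs at h2 with hcase
      · exact absurd rfl h2
      · exact hsupp i' j' h1 h2 k hk1 hk2
    obtain ⟨u', hu'val, hu'mem⟩ := ih M' hcard' hut' hsupp''
    refine ⟨u' * elemU i j hij a, ?_, ?_⟩
    · rw [Units.val_mul, hu'val, elemU_val, hM', mul_assoc,
        elem_mul_elem hij, neg_add_cancel, Matrix.single_zero, add_zero, mul_one]
    · exact mul_mem hu'mem (elemU_mem s i j hij hilt (hsupp i j hij hMij) a)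


end Stmt12Aux

open Stmt12Aux

/-- The unipotent group `Unip_{n+1}(F)`: the subgroup of invertible `(n+1)×(n+1)` matrices
over `F` generated by the elementary matrices `e_{i,j}(a) = 1 + a·E_{i,j}`, `i < j`
(equivalently, the group of upper unitriangular matrices). -/
def unipGroup (n : ℕ) (F : Type) [Field F] :
    Subgroup (Matrix (Fin (n + 1)) (Fin (n + 1)) F)ˣ :=
  Subgroup.closure {M | ∃ (i j : Fin (n + 1)) (a : F), i < j ∧
    (M : Matrix (Fin (n + 1)) (Fin (n + 1)) F) = 1 + Matrix.single i j a}

/-- For `0 ≤ i ≤ n-1`, the subgroup `K_i` of `Unip_{n+1}(F)` generated by the superdiagonal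
elementary matrices `e_{j,j+1}(a)` with `j ∈ {1,…,n} \ {i+1}` (`1`-based indexing; here
`j : Fin n` is `0`-based, so the excluded index is `j = i`). -/
def unipK (n : ℕ) (F : Type) [Field F] (i : Fin n) :
    Subgroup (Matrix (Fin (n + 1)) (Fin (n + 1)) F)ˣ :=
  Subgroup.closure {M | ∃ (j : Fin n) (a : F), j ≠ i ∧
    (M : Matrix (Fin (n + 1)) (Fin (n + 1)) F) =
      1 + Matrix.single j.castSucc j.succ a}

namespace Stmt12Aux

variable {n : ℕ} {F : Type} [Field F]

lemma unipK_eq_Lgrp (i : Fin n) : unipK n F i = Lgrp {j | j ≠ i} := rfl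

lemma Lgrp_le_unip (s : Set (Fin n)) : Lgrp s ≤ unipGroup n F := by
  rw [Lgrp, unipGroup, Subgroup.closure_le]
  rintro M ⟨j, a, _, hval⟩
  exact Subgroup.subset_closure ⟨j.castSucc, j.succ, a, j.castSucc_lt_succ, hval⟩

lemma unip_le_UT : unipGroup n F ≤ (UTgrp : Subgroup (Matrix (Fin (n+1)) (Fin (n+1)) F)ˣ) := by
  rw [unipGroup, Subgroup.closure_le]
  rintro M ⟨i, j, a, hij, hval⟩
  have hlt : (i:ℕ) < (j:ℕ) := hij
  have hne : i ≠ j := ne_of_lt hij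
  have h1 : (M : Matrix (Fin (n+1)) (Fin (n+1)) F) * (1 + Matrix.single i j (-a)) = 1 := by
    rw [hval, elem_mul_elem hne, add_neg_cancel, Matrix.single_zero, add_zero]
  have hinv : ((M⁻¹ : (Matrix (Fin (n+1)) (Fin (n+1)) F)ˣ) : Matrix (Fin (n+1)) (Fin (n+1)) F)
      = 1 + Matrix.single i j (-a) := by
    calc ((M⁻¹ : (Matrix (Fin (n+1)) (Fin (n+1)) F)ˣ) : Matrix (Fin (n+1)) (Fin (n+1)) F)
        = ↑M⁻¹ * ((M : Matrix (Fin (n+1)) (Fin (n+1)) F) *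
            (1 + Matrix.single i j (-a))) := by rw [h1, mul_one]
      _ = (↑M⁻¹ * (M : Matrix (Fin (n+1)) (Fin (n+1)) F)) *
            (1 + Matrix.single i j (-a)) := by rw [mul_assoc]
      _ = 1 + Matrix.single i j (-a) := by rw [Units.inv_mul, one_mul]
  constructor
  · rw [hval]; exact isUT_elem hlt a
  · rw [hinv]; exact isUT_elem hlt (-a)

end Stmt12Aux

set_option maxHeartbeats 2000000 in
/-- For `n ≥ 2` and a prime power `q`, every element of `Unip_{n+1}(F_q)`
is a product of at most `6` elements of `K_0 ∪ K_{n-1}`. -/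
theorem stmt12 (n : ℕ) (hn : 2 ≤ n) (q : ℕ) (hq : IsPrimePow q)
    (F : Type) [Field F] [Fintype F] (hF : Fintype.card F = q) :
    ∀ g ∈ unipGroup n F, ∃ gs : List (Matrix (Fin (n + 1)) (Fin (n + 1)) F)ˣ,
      gs.length ≤ 6 ∧
      (∀ x ∈ gs, x ∈ unipK n F ⟨0, by omega⟩ ∨ x ∈ unipK n F ⟨n - 1, by omega⟩) ∧
      gs.prod = g := by
  classical
  intro g hg
  set i0 : Fin n := ⟨0, by omega⟩ with hi0
  set iN : Fin n := ⟨n - 1, by omega⟩ with hiN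
  set s0 : Set (Fin n) := {j | j ≠ i0} with hs0
  set sN : Set (Fin n) := {j | j ≠ iN} with hsN
  have hgUTg := unip_le_UT hg
  have hgUT : IsUT (g : Matrix (Fin (n+1)) (Fin (n+1)) F) := hgUTg.1
  set l : Fin (n+1) := Fin.last n with hldef
  set z0 : Fin (n+1) := ⟨0, by omega⟩ with hz0
  set o1 : Fin (n+1) := ⟨1, by omega⟩ with ho1
  have h01 : z0 ≠ o1 := Fin.ne_of_val_ne (show (0:ℕ) ≠ 1 by omega)
  have h0l : z0 ≠ l := Fin.ne_of_val_ne (show (0:ℕ) ≠ n by omega)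
  have h1l : o1 ≠ l := Fin.ne_of_val_ne (show (1:ℕ) ≠ n by omega)
  -- the matrix k1: g with its last column replaced by the standard basis vector
  set k1mat : Matrix (Fin (n+1)) (Fin (n+1)) F :=
    Matrix.of fun r c => if c = l then (if r = l then (1:F) else 0)
      else (g : Matrix (Fin (n+1)) (Fin (n+1)) F) r c with hk1mat
  have hk1app : ∀ r c, k1mat r c = if c = l then (if r = l then (1:F) else 0)
      else (g : Matrix (Fin (n+1)) (Fin (n+1)) F) r c := fun r c => rfl
  have hk1UT : IsUT k1mat := by
    constructor
    · intro r
      rw [hk1app]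
      by_cases hr : r = l
      · rw [if_pos hr, if_pos hr]
      · rw [if_neg hr]; exact hgUT.1 r
    · intro r c hrc
      rw [hk1app]
      by_cases hc : c = l
      · exfalso
        have : (c:ℕ) = n := by rw [hc]; rfl
        have := r.isLt
        omega
      · rw [if_neg hc]; exact hgUT.2 r c hrc
  have hk1supp : ∀ r c : Fin (n+1), r ≠ c → k1mat r c ≠ 0 →
      ∀ k : Fin n, (r:ℕ) ≤ (k:ℕ) → (k:ℕ) < (c:ℕ) → k ∈ sN := by
    intro r c hrc hne k _ hk2
    rw [hk1app] at hne
    by_cases hc : c = l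
    · exfalso
      rw [if_pos hc, if_neg (fun hh : r = l => hrc (hh.trans hc.symm))] at hne
      exact hne rfl
    · have hcn : (c:ℕ) ≠ n := fun hh => hc (Fin.ext hh)
      have := c.isLt
      refine Fin.ne_of_val_ne (show (k:ℕ) ≠ n - 1 by omega)
  obtain ⟨k1u, hk1v, hk1m⟩ := exists_unit_mem sN (suppF k1mat).card k1mat le_rfl hk1UT hk1supp
  have hk1unip : k1u ∈ unipGroup n F := Lgrp_le_unip sN hk1m
  have hk1UTg := unip_le_UT hk1unip
  set Eu : (Matrix (Fin (n+1)) (Fin (n+1)) F)ˣ := k1u⁻¹ * g with hEu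
  have hEuUTg : Eu ∈ (UTgrp : Subgroup (Matrix (Fin (n+1)) (Fin (n+1)) F)ˣ) :=
    mul_mem (inv_mem hk1UTg) hgUTg
  have hEuUT : IsUT (Eu : Matrix (Fin (n+1)) (Fin (n+1)) F) := hEuUTg.1
  have hEcol : ∀ r c : Fin (n+1), c ≠ l →
      (Eu : Matrix (Fin (n+1)) (Fin (n+1)) F) r c = (1 : Matrix (Fin (n+1)) (Fin (n+1)) F) r c := by
    intro r c hc
    have hgc : ∀ k, (g : Matrix (Fin (n+1)) (Fin (n+1)) F) k c
        = (k1u : Matrix (Fin (n+1)) (Fin (n+1)) F) k c := by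
      intro k; rw [hk1v, hk1app, if_neg hc]
    calc (Eu : Matrix (Fin (n+1)) (Fin (n+1)) F) r c
        = ((↑(k1u⁻¹) : Matrix (Fin (n+1)) (Fin (n+1)) F) *
            (g : Matrix (Fin (n+1)) (Fin (n+1)) F)) r c := by rw [hEu, Units.val_mul]
      _ = ∑ k, (↑(k1u⁻¹) : Matrix (Fin (n+1)) (Fin (n+1)) F) r k *
            (g : Matrix (Fin (n+1)) (Fin (n+1)) F) k c := Matrix.mul_apply
      _ = ∑ k, (↑(k1u⁻¹) : Matrix (Fin (n+1)) (Fin (n+1)) F) r k *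
            (k1u : Matrix (Fin (n+1)) (Fin (n+1)) F) k c := by
          refine Finset.sum_congr rfl fun k _ => ?_
          rw [hgc]
      _ = ((↑(k1u⁻¹) : Matrix (Fin (n+1)) (Fin (n+1)) F) *
            (k1u : Matrix (Fin (n+1)) (Fin (n+1)) F)) r c := (Matrix.mul_apply).symm
      _ = (1 : Matrix (Fin (n+1)) (Fin (n+1)) F) r c := by rw [Units.inv_mul]
  set c1 : F := (Eu : Matrix (Fin (n+1)) (Fin (n+1)) F) z0 l with hc1
  set e01p := elemU z0 o1 h01 c1 with he01p
  set e1l := elemU o1 l h1l (1:F) with he1l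
  set e01m := elemU z0 o1 h01 (-c1) with he01m
  set e1lm := elemU o1 l h1l (-1:F) with he1lm
  set e0lm := elemU z0 l h0l (-c1) with he0lm
  set e0lp := elemU z0 l h0l c1 with he0lp
  set X := e1lm * (e0lm * Eu) with hX
  -- memberships
  have m_e01 : ∀ b : F, elemU z0 o1 h01 b ∈ Lgrp sN := by
    intro b
    refine elemU_mem sN z0 o1 h01 (show (0:ℕ) < 1 by omega) ?_ b
    intro k _ hk2
    have hk2' : (k:ℕ) < 1 := hk2
    exact Fin.ne_of_val_ne (show (k:ℕ) ≠ n - 1 by omega)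
  have m_e1l : ∀ b : F, elemU o1 l h1l b ∈ Lgrp s0 := by
    intro b
    refine elemU_mem s0 o1 l h1l (show (1:ℕ) < n by omega) ?_ b
    intro k hk1 _
    have hk1' : (1:ℕ) ≤ (k:ℕ) := hk1
    exact Fin.ne_of_val_ne (show (k:ℕ) ≠ 0 by omega)
  have hmemUnip : ∀ (i j : Fin (n+1)) (h : i ≠ j) (hlt : (i:ℕ) < (j:ℕ)) (a : F),
      elemU i j h a ∈ unipGroup n F := by
    intro i j h hlt a
    exact Subgroup.subset_closure ⟨i, j, a, hlt, rfl⟩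
  have hXUTg : X ∈ (UTgrp : Subgroup (Matrix (Fin (n+1)) (Fin (n+1)) F)ˣ) := by
    refine mul_mem (unip_le_UT (hmemUnip o1 l h1l (show (1:ℕ) < n by omega) (-1)))
      (mul_mem (unip_le_UT (hmemUnip z0 l h0l (show (0:ℕ) < n by omega) (-c1))) hEuUTg)
  have hXUT : IsUT (X : Matrix (Fin (n+1)) (Fin (n+1)) F) := hXUTg.1
  have hXrow : ∀ c : Fin (n+1), c ≠ z0 → (X : Matrix (Fin (n+1)) (Fin (n+1)) F) z0 c = 0 := by
    intro c hc
    have hval : (X : Matrix (Fin (n+1)) (Fin (n+1)) F)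
        = (1 + Matrix.single o1 l (-1)) *
          ((1 + Matrix.single z0 l (-c1)) * (Eu : Matrix (Fin (n+1)) (Fin (n+1)) F)) := by
      rw [hX, Units.val_mul, Units.val_mul, he1lm, he0lm, elemU_val, elemU_val]
    set Y : Matrix (Fin (n+1)) (Fin (n+1)) F :=
      (1 + Matrix.single z0 l (-c1)) * (Eu : Matrix (Fin (n+1)) (Fin (n+1)) F) with hY
    have step1 : (X : Matrix (Fin (n+1)) (Fin (n+1)) F) z0 c = Y z0 c := by
      rw [hval, add_mul, one_mul, Matrix.add_apply,
        Matrix.single_mul_apply_of_ne (-1) o1 l z0 c h01 Y, add_zero]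
    have step2 : Y z0 c = (Eu : Matrix (Fin (n+1)) (Fin (n+1)) F) z0 c +
        (-c1) * (Eu : Matrix (Fin (n+1)) (Fin (n+1)) F) l c := by
      rw [hY, add_mul, one_mul, Matrix.add_apply,
        Matrix.single_mul_apply_same (-c1) z0 l c]
    rw [step1, step2]
    by_cases hcl : c = l
    · subst hcl
      rw [← hc1, hEuUT.1 l]
      ring
    · rw [hEcol z0 c hcl, hEcol l c hcl, Matrix.one_apply_ne (Ne.symm hc),
        Matrix.one_apply_ne (fun hh : l = c => hcl hh.symm)]
      ring
  have hXsupp : ∀ r c : Fin (n+1), r ≠ c → (X : Matrix (Fin (n+1)) (Fin (n+1)) F) r c ≠ 0 →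
      ∀ k : Fin n, (r:ℕ) ≤ (k:ℕ) → (k:ℕ) < (c:ℕ) → k ∈ s0 := by
    intro r c hrc hne k hk1 _
    have hr : r ≠ z0 := by
      intro hh; subst hh
      exact hne (hXrow c (fun hh2 => hrc hh2.symm))
    have hr' : (r:ℕ) ≠ 0 := fun hh => hr (Fin.ext hh)
    exact Fin.ne_of_val_ne (show (k:ℕ) ≠ 0 by omega)
  obtain ⟨Xu, hXv, hXm⟩ := exists_unit_mem s0 (suppF (X : Matrix (Fin (n+1)) (Fin (n+1)) F)).card
    (X : Matrix (Fin (n+1)) (Fin (n+1)) F) le_rfl hXUT hXsupp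
  have hXmem : X ∈ Lgrp s0 := by
    have : Xu = X := Units.ext hXv
    rwa [this] at hXm
  -- the two unit identities
  have H1 : e01p * e1l * e01m * e1lm = e0lp := by
    apply Units.ext
    rw [Units.val_mul, Units.val_mul, Units.val_mul,
      he01p, he1l, he01m, he1lm, he0lp, elemU_val, elemU_val, elemU_val, elemU_val, elemU_val,
      elem_comm h01 h1l h0l c1 (1:F), mul_one]
  have H2 : e0lp * e0lm = 1 := by
    apply Units.ext
    rw [Units.val_mul, he0lp, he0lm, elemU_val, elemU_val, Units.val_one,
      elem_mul_elem h0l, add_neg_cancel, Matrix.single_zero, add_zero]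
  -- assemble
  refine ⟨[k1u, e01p, e1l, e01m, X], by simp, ?_, ?_⟩
  · intro x hx
    have hKN : unipK n F iN = Lgrp sN := rfl
    have hK0 : unipK n F i0 = Lgrp s0 := rfl
    simp only [List.mem_cons, List.not_mem_nil, or_false] at hx
    rcases hx with rfl | rfl | rfl | rfl | rfl
    · right; rw [hKN]; exact hk1m
    · right; rw [hKN]; exact m_e01 c1
    · left; rw [hK0]; exact m_e1l 1
    · right; rw [hKN]; exact m_e01 (-c1)
    · left; rw [hK0]; exact hXmem
  · have hprod : [k1u, e01p, e1l, e01m, X].prod = k1u * (e01p * (e1l * (e01m * X))) := by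
      simp [List.prod_cons]
    rw [hprod, hX, hEu]
    calc k1u * (e01p * (e1l * (e01m * (e1lm * (e0lm * (k1u⁻¹ * g))))))
        = k1u * ((e01p * e1l * e01m * e1lm) * (e0lm * (k1u⁻¹ * g))) := by
          simp only [mul_assoc]
      _ = k1u * ((e0lp * e0lm) * (k1u⁻¹ * g)) := by rw [H1]; simp only [mul_assoc]
      _ = k1u * (k1u⁻¹ * g) := by rw [H2, one_mul]
      _ = g := by rw [mul_inv_cancel_left]
end
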